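/- arXiv:1208.3167 — 9 statements merged into one kernel-verified Lean document; each statement's English description precedes it below -/
import Mathlib

section
/- Let S = ⟨e, a₁, …, a_t⟩ with blowup B and generating set D = {e, d₁, …, d_t}, dᵢ = aᵢ − e. If (y₀, y₁, …, y_t) is a D-factorization of s − re with length |y| ≤ r (where s ∈ S, r ∈ ℕ), then (2y₀ + r − |y|, y₁, …, y_t) is an S-factorization of s of length r + y₀; in particular ord(s; S) ≥ r. -/
open Finset

/-- The set of factorizations of `n` over the generating tuple `g`. -/
def Fac {t : ℕ} (g : Fin (t + 1) → ℕ) (n : ℕ) : Set (Fin (t + 1) → ℕ) :=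
  {c | ∑ i, c i * g i = n}

/-- The numerical semigroup generated by the tuple `g`. -/
def Sg {t : ℕ} (g : Fin (t + 1) → ℕ) : Set ℕ :=
  {n | ∃ c : Fin (t + 1) → ℕ, ∑ i, c i * g i = n}

/-- The order of `n`: the maximal length of a factorization of `n` over `g`. -/
noncomputable def ordOf {t : ℕ} (g : Fin (t + 1) → ℕ) (n : ℕ) : ℕ :=
  sSup {r | ∃ c ∈ Fac g n, ∑ i, c i = r}

/-- The minimal length of a factorization of `n` over `g`. -/
noncomputable def minordOf {t : ℕ} (g : Fin (t + 1) → ℕ) (n : ℕ) : ℕ :=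
  sInf {r | ∃ c ∈ Fac g n, ∑ i, c i = r}

/-- The denumerant of `n` with respect to `g`. -/
noncomputable def denum {t : ℕ} (g : Fin (t + 1) → ℕ) (n : ℕ) : ℕ :=
  (Fac g n).ncard

/-- The maximal denumerant of an element: the number of maximal-length factorizations. -/
noncomputable def dmaxEl {t : ℕ} (g : Fin (t + 1) → ℕ) (n : ℕ) : ℕ :=
  {c ∈ Fac g n | ∑ i, c i = ordOf g n}.ncard

/-- The maximal denumerant of the semigroup generated by `g`. -/
noncomputable def dmax {t : ℕ} (g : Fin (t + 1) → ℕ) : ℕ :=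
  sSup {m | ∃ n ∈ Sg g, dmaxEl g n = m}

/-- The generating tuple `D` of the blowup: `{e, a₁ - e, …, a_t - e}`. -/
def blowD {t : ℕ} (g : Fin (t + 1) → ℕ) : Fin (t + 1) → ℕ :=
  fun i => if i = 0 then g 0 else g i - g 0

/-- The adjustment of `n`:  `n - ord(n) * e`. -/
noncomputable def adj {t : ℕ} (g : Fin (t + 1) → ℕ) (n : ℕ) : ℕ :=
  n - ordOf g n * g 0

/-- The Apery set with respect to `u` of the semigroup generated by `g`. -/
def Ap {t : ℕ} (g : Fin (t + 1) → ℕ) (u : ℕ) : Set ℕ :=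
  {w ∈ Sg g | ¬ ∃ b ∈ Sg g, w = b + u}

/-- `g` is the (strictly increasing) minimal generating tuple of a numerical semigroup
with multiplicity `g 0`. -/
structure IsNumSgp {t : ℕ} (g : Fin (t + 1) → ℕ) : Prop where
  mono : StrictMono g
  pos : 0 < g 0
  gcd_eq_one : Finset.gcd Finset.univ g = 1
  minimal : ∀ i, ∀ c : Fin (t + 1) → ℕ, ∑ j, c j * g j = g i → c = Pi.single i 1

/-- `S` is additive: `ord(u + e) = ord(u) + 1` for all `u ∈ S`. -/
def IsAdditive {t : ℕ} (g : Fin (t + 1) → ℕ) : Prop :=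
  ∀ u ∈ Sg g, ordOf g (u + g 0) = ordOf g u + 1

/-- Membership of an integer in a set of naturals. -/
def ZMem (T : Set ℕ) (z : ℤ) : Prop := 0 ≤ z ∧ z.toNat ∈ T

/-- The Frobenius number: the largest integer not in `T`. -/
noncomputable def Frob (T : Set ℕ) : ℤ := sSup {z : ℤ | ¬ ZMem T z}

/-- `T` is symmetric: whenever `x + y = F(T)`, exactly one of `x`, `y` lies in `T`. -/
def Symm (T : Set ℕ) : Prop := ∀ x y : ℤ, x + y = Frob T → (ZMem T x ↔ ¬ ZMem T y)

/-- An abstract numerical semigroup. -/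
structure IsNumSemigroup (T : Set ℕ) : Prop where
  zero_mem : 0 ∈ T
  add_mem : ∀ a ∈ T, ∀ b ∈ T, a + b ∈ T
  cofinite : Tᶜ.Finite

/-- The Apery set of an abstract numerical semigroup. -/
def ApS (T : Set ℕ) (u : ℕ) : Set ℕ := {w ∈ T | ¬ ∃ b ∈ T, w = b + u}

/-- Lemma 2.2(2). -/
theorem stmt1 {t : ℕ} (g : Fin (t + 1) → ℕ) (hS : IsNumSgp g)
    (s r : ℕ) (hs : s ∈ Sg g) (hre : r * g 0 ≤ s)
    (y : Fin (t + 1) → ℕ) (hy : y ∈ Fac (blowD g) (s - r * g 0))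
    (hlen : ∑ i, y i ≤ r) :
    Function.update y 0 (2 * y 0 + r - ∑ i, y i) ∈ Fac g s ∧
      (∑ i, Function.update y 0 (2 * y 0 + r - ∑ i, y i) i) = r + y 0 ∧
      r ≤ ordOf g s := by
  simp only [Fac, Set.mem_setOf_eq] at hy ⊢
  have he : 0 < g 0 := hS.pos
  set c0 := 2 * y 0 + r - ∑ i, y i with hc0
  have hge : ∀ i : Fin t, g 0 ≤ g i.succ := fun i => (hS.mono (Fin.succ_pos i)).le
  set A := ∑ i : Fin t, y i.succ * g i.succ with hA
  set B := ∑ i : Fin t, y i.succ with hB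
  set C := ∑ i : Fin t, y i.succ * (g i.succ - g 0) with hC
  have hlen' : ∑ i, y i = y 0 + B := by rw [Fin.sum_univ_succ]
  have hCB : C + B * g 0 = A := by
    rw [hC, hB, hA, Finset.sum_mul, ← Finset.sum_add_distrib]
    refine Finset.sum_congr rfl fun i _ => ?_
    rw [← Nat.mul_add, Nat.sub_add_cancel (hge i)]
  have hy' : y 0 * g 0 + C = s - r * g 0 := by
    rw [← hy, Fin.sum_univ_succ]
    have h0 : y 0 * blowD g 0 = y 0 * g 0 := by simp [blowD]
    rw [h0]
    congr 1
  have hs' : y 0 * g 0 + C + r * g 0 = s := by omega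
  have hBr : B ≤ r := by omega
  obtain ⟨k, hk⟩ : ∃ k, r = B + k := ⟨r - B, by omega⟩
  have hc0' : c0 = y 0 + k := by omega
  have hupd : ∀ (f : Fin (t + 1) → ℕ),
      ∑ i, Function.update y 0 c0 i * f i = c0 * f 0 + ∑ i : Fin t, y i.succ * f i.succ := by
    intro f
    rw [Fin.sum_univ_succ]
    simp [Function.update_of_ne (Fin.succ_ne_zero _)]
  have hfac : ∑ i, Function.update y 0 c0 i * g i = s := by
    rw [hupd, hc0', ← hA, ← hCB, ← hs', hk]; ring
  have hlsum : ∑ i, Function.update y 0 c0 i = r + y 0 := by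
    have : ∑ i, Function.update y 0 c0 i = c0 + B := by
      have := hupd (fun _ => 1)
      simpa using this
    omega
  refine ⟨hfac, hlsum, ?_⟩
  have hbdd : BddAbove {r | ∃ c ∈ Fac g s, ∑ i, c i = r} := by
    refine ⟨s, fun l hl => ?_⟩
    obtain ⟨c, hc, rfl⟩ := hl
    simp only [Fac, Set.mem_setOf_eq] at hc
    calc ∑ i, c i ≤ ∑ i, c i * g i := Finset.sum_le_sum fun i _ => by
          have : 1 ≤ g i := le_trans he ((hS.mono.monotone (Fin.zero_le i)))
          nlinarith
      _ = s := hc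
  have hmem : r + y 0 ∈ {r | ∃ c ∈ Fac g s, ∑ i, c i = r} :=
    ⟨Function.update y 0 c0, hfac, hlsum⟩
  calc r ≤ r + y 0 := Nat.le_add_right _ _
    _ ≤ ordOf g s := le_csSup hbdd hmem
end

section
/- Let S be a numerical semigroup with multiplicity e, blowup B and generating set D. For s ∈ S, define adj(s) = s − ord(s;S)·e. If (x₀, x₁, …, x_t) is a D-factorization of adj(s) with length at most ord(s;S), then x₀ = 0. -/
open Finset

/-- Lemma 3.3: any `D`-factorization of `adj s` of length at most `ord s` has first
coordinate zero. -/
theorem stmt2 {t : ℕ} (g : Fin (t + 1) → ℕ) (hS : IsNumSgp g)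
    (s : ℕ) (hs : s ∈ Sg g) (x : Fin (t + 1) → ℕ)
    (hx : x ∈ Fac (blowD g) (adj g s)) (hlen : ∑ i, x i ≤ ordOf g s) :
    x 0 = 0 := by
  classical
  set e := g 0 with he
  set N := ordOf g s with hN
  set A := {r | ∃ c ∈ Fac g s, ∑ i, c i = r} with hA
  have hgpos : ∀ i, 0 < g i := fun i =>
    hS.pos.trans_le (hS.mono.monotone (Fin.zero_le i))
  have hAne : A.Nonempty := by
    obtain ⟨c, hc⟩ := hs
    exact ⟨∑ i, c i, c, hc, rfl⟩
  have hAbdd : BddAbove A := by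
    refine ⟨s, fun r hr => ?_⟩
    obtain ⟨c, hc, rfl⟩ := hr
    calc ∑ i, c i ≤ ∑ i, c i * g i :=
          Finset.sum_le_sum (fun i _ => Nat.le_mul_of_pos_right _ (hgpos i))
      _ = s := hc
  have hNmem : N ∈ A := Nat.sSup_mem hAne hAbdd
  obtain ⟨c, hc, hcN⟩ := hNmem
  have hNe : N * e ≤ s := by
    calc N * e = ∑ i, c i * e := by rw [← hcN, Finset.sum_mul]
      _ ≤ ∑ i, c i * g i :=
          Finset.sum_le_sum (fun i _ =>
            Nat.mul_le_mul_left _ (hS.mono.monotone (Fin.zero_le i)))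
      _ = s := hc
  -- rewrite hx
  have hxeq : x 0 * e + ∑ i : Fin t, x i.succ * (g i.succ - e) = s - N * e := by
    have := hx
    simp only [Fac, Set.mem_setOf_eq, adj, ← hN, ← he] at this
    rw [Fin.sum_univ_succ] at this
    simp only [blowD, Fin.succ_ne_zero, if_false, if_pos rfl, ← he] at this
    exact this
  set L : ℕ := ∑ i : Fin t, x i.succ with hL
  have hlen' : x 0 + L ≤ N := by
    rw [hL]
    rw [Fin.sum_univ_succ] at hlen
    exact hlen
  have hLN : L ≤ N := le_trans (Nat.le_add_left _ _) hlen'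
  -- build a factorization of s of length N + x 0
  set y : Fin (t + 1) → ℕ := Fin.cons (N + x 0 - L) (fun i => x i.succ) with hy
  have hsum2 : ∑ i : Fin t, x i.succ * g i.succ
      = (∑ i : Fin t, x i.succ * (g i.succ - e)) + L * e := by
    rw [hL, Finset.sum_mul, ← Finset.sum_add_distrib]
    refine Finset.sum_congr rfl (fun i _ => ?_)
    have hle : e ≤ g i.succ := le_of_lt (hS.mono (Fin.succ_pos i))
    rw [← Nat.mul_add, Nat.sub_add_cancel hle]
  have hyfac : ∑ i, y i * g i = s := by
    rw [Fin.sum_univ_succ]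
    simp only [hy, Fin.cons_zero, Fin.cons_succ]
    rw [hsum2, Nat.sub_mul, Nat.add_mul]
    have h1 : L * e ≤ N * e := Nat.mul_le_mul_right _ hLN
    simp only [← he]
    omega
  have hymem : N + x 0 ∈ A := by
    refine ⟨y, hyfac, ?_⟩
    rw [Fin.sum_univ_succ]
    simp only [hy, Fin.cons_zero, Fin.cons_succ, ← hL]
    omega
  have : N + x 0 ≤ N := by
    have h := le_csSup hAbdd hymem
    rwa [hN, ordOf] at h ⊢
  omega
end

section
/- Let S be a numerical semigroup with multiplicity e, blowup B and generating set D. For every s ∈ S, the maximal denumerant d_max(s; S) (the number of S-factorizations of s of length ord(s;S)) equals the number of D-factorizations of adj(s) = s − ord(s;S)·e whose length is at most ord(s;S). -/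
open Finset

/-- Proposition 3.4: `d_max(s; S)` equals the number of `D`-factorizations of `adj s`
of length at most `ord s`. -/
theorem stmt3 {t : ℕ} (g : Fin (t + 1) → ℕ) (hS : IsNumSgp g)
    (s : ℕ) (hs : s ∈ Sg g) :
    dmaxEl g s = {y ∈ Fac (blowD g) (adj g s) | ∑ i, y i ≤ ordOf g s}.ncard := by
  classical
  have hg0 : 0 < g 0 := hS.pos
  have hgi : ∀ i, g 0 ≤ g i := fun i => hS.mono.monotone (Fin.zero_le i)
  set r := ordOf g s with hr
  set M := {m | ∃ c ∈ Fac g s, ∑ i, c i = m} with hM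
  have hbdd : BddAbove M := ⟨s, by
    rintro m ⟨c, hc, rfl⟩
    calc ∑ i, c i ≤ ∑ i, c i * g i :=
          Finset.sum_le_sum fun i _ => Nat.le_mul_of_pos_right _ (lt_of_lt_of_le hg0 (hgi i))
      _ = s := hc⟩
  have hne : M.Nonempty := by obtain ⟨c, hc⟩ := hs; exact ⟨_, ⟨c, hc, rfl⟩⟩
  have hrM : r ∈ M := by
    have : sSup M ∈ M := Nat.sSup_mem hne hbdd
    exact this
  obtain ⟨c₀, hc₀, hc₀s⟩ := hrM
  have hle : ∀ c : Fin (t+1) → ℕ, (∑ i, c i * g i = s) → ∑ i, c i ≤ r := fun c hc =>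
    le_csSup hbdd ⟨c, hc, rfl⟩
  have hc₀' : ∑ i, c₀ i * g i = s := hc₀
  have hre : r * g 0 ≤ s := by
    calc r * g 0 = (∑ i, c₀ i) * g 0 := by rw [hc₀s]
      _ = ∑ i, c₀ i * g 0 := Finset.sum_mul _ _ _
      _ ≤ ∑ i, c₀ i * g i := Finset.sum_le_sum fun i _ => Nat.mul_le_mul_left _ (hgi i)
      _ = s := hc₀'
  have hadjdef : adj g s = s - r * g 0 := rfl
  have hadj : adj g s + r * g 0 = s := by rw [hadjdef]; exact Nat.sub_add_cancel hre
  have key : ∀ y : Fin (t+1) → ℕ,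
      (∑ i : Fin t, y i.succ * (g i.succ - g 0)) + (∑ i : Fin t, y i.succ) * g 0
        = ∑ i : Fin t, y i.succ * g i.succ := by
    intro y
    rw [Finset.sum_mul, ← Finset.sum_add_distrib]
    exact Finset.sum_congr rfl fun i _ => by
      rw [← Nat.mul_add, Nat.sub_add_cancel (hgi i.succ)]
  have exg : ∀ y : Fin (t+1) → ℕ, ∑ i, y i * g i = y 0 * g 0 + ∑ i : Fin t, y i.succ * g i.succ :=
    fun y => Fin.sum_univ_succ _
  have exD : ∀ y : Fin (t+1) → ℕ, ∑ i, y i * blowD g i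
      = y 0 * g 0 + ∑ i : Fin t, y i.succ * (g i.succ - g 0) := by
    intro y
    rw [Fin.sum_univ_succ]
    simp [blowD, Fin.succ_ne_zero]
  have exs : ∀ y : Fin (t+1) → ℕ, ∑ i, y i = y 0 + ∑ i : Fin t, y i.succ :=
    fun y => Fin.sum_univ_succ _
  set f : (Fin (t+1) → ℕ) → (Fin (t+1) → ℕ) := fun c i => if i = 0 then 0 else c i with hf
  have hinj : Set.InjOn f {c | c ∈ Fac g s ∧ ∑ i, c i = r} := by
    rintro c ⟨hc, hcs⟩ c' ⟨hc', hcs'⟩ hfe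
    have htail : ∀ i : Fin t, c i.succ = c' i.succ := fun i => by
      have := congrFun hfe i.succ
      simpa [hf, Fin.succ_ne_zero] using this
    have hT : ∑ i : Fin t, c i.succ = ∑ i : Fin t, c' i.succ :=
      Finset.sum_congr rfl fun i _ => htail i
    have e1 := exs c
    have e2 := exs c'
    have h0 : c 0 = c' 0 := by omega
    funext i
    exact Fin.cases h0 htail i
  have himg : f '' {c | c ∈ Fac g s ∧ ∑ i, c i = r}
      = {y | y ∈ Fac (blowD g) (adj g s) ∧ ∑ i, y i ≤ r} := by
    ext y
    constructor
    · rintro ⟨c, ⟨hc, hcs⟩, rfl⟩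
      have hcv : ∑ i, c i * g i = s := hc
      have hfsum : ∑ i, f c i * blowD g i = ∑ i : Fin t, c i.succ * (g i.succ - g 0) := by
        rw [exD]; simp [hf, Fin.succ_ne_zero]
      have hfl : ∑ i, f c i = ∑ i : Fin t, c i.succ := by
        rw [exs]; simp [hf, Fin.succ_ne_zero]
      have e1 := key c
      have e3 := exs c
      have e5 : c 0 * g 0 + (∑ i : Fin t, c i.succ) * g 0 = r * g 0 := by
        rw [← add_mul]
        rw [show c 0 + ∑ i : Fin t, c i.succ = r by omega]
      have e6 : c 0 * g 0 + ∑ i : Fin t, c i.succ * g i.succ = s := by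
        rw [← exg c]; exact hcv
      constructor
      · show ∑ i, f c i * blowD g i = adj g s
        rw [hfsum]
        linarith [e1, e5, e6, hadj]
      · show ∑ i, f c i ≤ r
        rw [hfl]; omega
    · rintro ⟨hy, hyl⟩
      have hyv : ∑ i, y i * blowD g i = adj g s := hy
      have e1 := key y
      have e3 := exs y
      set T := ∑ i : Fin t, y i.succ with hTdef
      have hTr : T ≤ r := by omega
      set c : Fin (t+1) → ℕ := Fin.cons (r + y 0 - T) (fun i => y i.succ) with hcdef
      have hc0 : c 0 = r + y 0 - T := rfl
      have hcs : ∀ i : Fin t, c i.succ = y i.succ := fun i => by simp [hcdef]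
      have hsumc : ∑ i, c i = r + y 0 := by
        rw [exs c, hc0]
        have hTc : ∑ i : Fin t, c i.succ = T := Finset.sum_congr rfl fun i _ => hcs i
        omega
      have hfac : ∑ i, c i * g i = s := by
        rw [exg c, hc0]
        have hC : ∑ i : Fin t, c i.succ * g i.succ = ∑ i : Fin t, y i.succ * g i.succ :=
          Finset.sum_congr rfl fun i _ => by rw [hcs i]
        rw [hC]
        have e4 : (r + y 0 - T) * g 0 + T * g 0 = r * g 0 + y 0 * g 0 := by
          rw [← add_mul, Nat.sub_add_cancel (by omega : T ≤ r + y 0), add_mul]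
        have e5 : y 0 * g 0 + (∑ i : Fin t, y i.succ * (g i.succ - g 0)) = adj g s := by
          rw [← exD y]; exact hyv
        linarith [e1, e4, e5, hadj]
      have hy0 : y 0 = 0 := by
        have := hle c hfac
        omega
      refine ⟨c, ⟨hfac, by omega⟩, ?_⟩
      funext i
      refine Fin.cases ?_ (fun j => ?_) i
      · simp [hf, hy0]
      · simp only [hf, Fin.succ_ne_zero, if_neg, ite_false]
        exact hcs j
  calc dmaxEl g s = {c | c ∈ Fac g s ∧ ∑ i, c i = r}.ncard := rfl
    _ = (f '' {c | c ∈ Fac g s ∧ ∑ i, c i = r}).ncard := (Set.ncard_image_of_injOn hinj).symm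
    _ = {y | y ∈ Fac (blowD g) (adj g s) ∧ ∑ i, y i ≤ r}.ncard := by rw [himg]
end

section
/- Let S be a numerical semigroup with multiplicity e and blowup B with generating set D. Let f ∈ Ap(B; e) (the Apéry set of B with respect to e), and set s = f + minord(f; D)·e where minord(f; D) is the minimal length of a D-factorization of f. Then s ∈ S, and for all k ≥ 0, adj(s + ke) = f; that is, ord(s + ke; S) = minord(f; D) + k. -/
open Finset

lemma key_sum {t : ℕ} (g : Fin (t + 1) → ℕ) (hm : StrictMono g) (c : Fin (t + 1) → ℕ) :
    ∑ i, c i * blowD g i + (∑ i : Fin t, c i.succ) * g 0 = ∑ i, c i * g i := by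
  rw [Fin.sum_univ_succ (f := fun i => c i * blowD g i),
      Fin.sum_univ_succ (f := fun i => c i * g i), Finset.sum_mul]
  simp only [blowD, eq_self_iff_true, if_true, Fin.succ_ne_zero, if_false]
  rw [add_assoc, ← Finset.sum_add_distrib]
  congr 1
  apply Finset.sum_congr rfl
  intro i _
  rw [← Nat.mul_add, Nat.sub_add_cancel (le_of_lt (hm (Fin.succ_pos i)))]

/-- Proposition 3.5(1). -/
theorem stmt4 {t : ℕ} (g : Fin (t + 1) → ℕ) (hS : IsNumSgp g)
    (f : ℕ) (hf : f ∈ Ap (blowD g) (g 0)) :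
    f + minordOf (blowD g) f * g 0 ∈ Sg g ∧
      ∀ k : ℕ,
        adj g (f + minordOf (blowD g) f * g 0 + k * g 0) = f ∧
        ordOf g (f + minordOf (blowD g) f * g 0 + k * g 0) = minordOf (blowD g) f + k := by
  obtain ⟨hfB, hfAp⟩ := hf
  set e := g 0 with he
  set m := minordOf (blowD g) f with hmdef
  have hmono := hS.mono
  -- a minimal D-factorization of f
  have hne : {r | ∃ c ∈ Fac (blowD g) f, ∑ i, c i = r}.Nonempty := by
    obtain ⟨c, hc⟩ := hfB
    exact ⟨∑ i, c i, c, hc, rfl⟩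
  obtain ⟨c, hcfac, hclen⟩ : ∃ c ∈ Fac (blowD g) f, ∑ i, c i = m := Nat.sInf_mem hne
  have hcfac' : ∑ i, c i * blowD g i = f := hcfac
  -- split f
  have hkeyc := key_sum g hmono c
  rw [hcfac'] at hkeyc
  have hclen' : c 0 + ∑ i : Fin t, c i.succ = m := by
    rw [← hclen, Fin.sum_univ_succ]
  -- upper bound on length of any S-factorization of f + (m+k)*e
  have hub : ∀ k : ℕ, ∀ c' : Fin (t + 1) → ℕ,
      ∑ i, c' i * g i = f + (m + k) * e → ∑ i, c' i ≤ m + k := by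
    intro k c' hc'
    by_contra hgt
    push_neg at hgt
    set L := ∑ i, c' i with hL
    set b := ∑ i : Fin t, c' i.succ * blowD g i.succ with hb
    have hkey := key_sum g hmono c'
    rw [hc'] at hkey
    have hsplit : ∑ i, c' i * blowD g i = c' 0 * e + b := by
      rw [Fin.sum_univ_succ]
      simp [blowD, hb, he]
    have hLsplit : L = c' 0 + ∑ i : Fin t, c' i.succ := by
      rw [hL, Fin.sum_univ_succ]
    -- so  b + L * e = f + (m+k) * e
    have heq : b + L * e = f + (m + k) * e := by
      have h1 : L * e = c' 0 * e + (∑ i : Fin t, c' i.succ) * e := by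
        rw [hLsplit]; ring
      rw [hsplit] at hkey
      linarith [hkey]
    set j := L - (m + k) - 1 with hj
    have hLj : L = m + k + 1 + j := by omega
    have hLe : L * e = (m + k) * e + e + j * e := by rw [hLj]; ring
    have hfb : f = (b + j * e) + e := by
      rw [hLe] at heq; linarith
    apply hfAp
    refine ⟨b + j * e, ?_, hfb⟩
    refine ⟨fun i => if i = 0 then j else c' i, ?_⟩
    rw [Fin.sum_univ_succ]
    simp only [eq_self_iff_true, if_true, Fin.succ_ne_zero, if_false]
    rw [blowD]
    simp only [eq_self_iff_true, if_true, ← he, hb]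
    ring
  -- the S-factorization witnessing the lower bound
  have hlow : ∀ k : ℕ, ∃ c'' : Fin (t + 1) → ℕ,
      ∑ i, c'' i * g i = f + (m + k) * e ∧ ∑ i, c'' i = m + c 0 + k := by
    intro k
    refine ⟨fun i => if i = 0 then 2 * c 0 + k else c i, ?_, ?_⟩
    · rw [Fin.sum_univ_succ]
      simp only [eq_self_iff_true, if_true, Fin.succ_ne_zero, if_false]
      -- from hkeyc : f + (∑ succ c) * e = ∑ c g
      have h2 : ∑ i, c i * g i = c 0 * e + ∑ i : Fin t, c i.succ * g i.succ := by
        rw [Fin.sum_univ_succ]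
      have h3 : f + (∑ i : Fin t, c i.succ) * e
          = c 0 * e + ∑ i : Fin t, c i.succ * g i.succ := by
        rw [← h2]; exact hkeyc
      have h4 : (2 * c 0 + k) * e = c 0 * e + c 0 * e + k * e := by ring
      have h5 : (m + k) * e = c 0 * e + (∑ i : Fin t, c i.succ) * e + k * e := by
        rw [← hclen']; ring
      rw [← he] at *
      linarith [h3]
    · rw [Fin.sum_univ_succ]
      simp only [eq_self_iff_true, if_true, Fin.succ_ne_zero, if_false]
      omega
  -- ordOf equals m + k
  have hord : ∀ k : ℕ, ordOf g (f + (m + k) * e) = m + k ∧ c 0 = 0 := by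
    intro k
    obtain ⟨c'', hfac, hlen⟩ := hlow k
    have hmem : m + c 0 + k ∈ {r | ∃ d ∈ Fac g (f + (m + k) * e), ∑ i, d i = r} :=
      ⟨c'', hfac, hlen⟩
    have hbdd : BddAbove {r | ∃ d ∈ Fac g (f + (m + k) * e), ∑ i, d i = r} := by
      refine ⟨m + k, fun r hr => ?_⟩
      obtain ⟨d, hd, hdl⟩ := hr
      rw [← hdl]
      exact hub k d hd
    have h1 : m + c 0 + k ≤ ordOf g (f + (m + k) * e) := le_csSup hbdd hmem
    have h2 : ordOf g (f + (m + k) * e) ≤ m + k := by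
      apply csSup_le ⟨_, hmem⟩
      rintro r ⟨d, hd, hdl⟩
      rw [← hdl]; exact hub k d hd
    omega
  constructor
  · obtain ⟨c'', hfac, _⟩ := hlow 0
    rw [add_zero] at hfac
    exact ⟨c'', hfac⟩
  · intro k
    have harr : f + m * e + k * e = f + (m + k) * e := by ring
    have := (hord k).1
    constructor
    · rw [adj, harr, this, ← he, Nat.add_sub_cancel]
    · rw [harr, this]
end

section
/- Let S be a numerical semigroup with multiplicity e and blowup B. Then the adjustment set adj(S) = {s − ord(s;S)·e : s ∈ S} is a finite set satisfying Ap(B; e) ⊆ adj(S) ⊆ B. -/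
open Finset

section Helpers

variable {t : ℕ} {g : Fin (t + 1) → ℕ}

lemma len_le (hpos : 0 < g 0) (hm : StrictMono g) {n : ℕ} {c : Fin (t+1) → ℕ}
    (hc : c ∈ Fac g n) : ∑ i, c i ≤ n := by
  have h1 : (∑ i, c i) * g 0 ≤ n := by
    rw [← hc, Finset.sum_mul]
    exact Finset.sum_le_sum fun i _ => Nat.mul_le_mul_left _ (hm.monotone (Fin.zero_le i))
  calc ∑ i, c i ≤ (∑ i, c i) * g 0 := Nat.le_mul_of_pos_right _ hpos
    _ ≤ n := h1

lemma bdd (hpos : 0 < g 0) (hm : StrictMono g) (n : ℕ) :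
    BddAbove {r | ∃ c ∈ Fac g n, ∑ i, c i = r} := by
  refine ⟨n, fun r hr => ?_⟩
  obtain ⟨c, hc, rfl⟩ := hr
  exact len_le hpos hm hc

lemma le_ord (hpos : 0 < g 0) (hm : StrictMono g) {n r : ℕ} {c : Fin (t+1) → ℕ}
    (hc : c ∈ Fac g n) (hr : ∑ i, c i = r) : r ≤ ordOf g n :=
  le_csSup (bdd hpos hm n) ⟨c, hc, hr⟩

lemma ord_spec (hpos : 0 < g 0) (hm : StrictMono g) {n : ℕ} (hn : n ∈ Sg g) :
    ∃ c ∈ Fac g n, ∑ i, c i = ordOf g n := by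
  have hne : {r | ∃ c ∈ Fac g n, ∑ i, c i = r}.Nonempty := by
    obtain ⟨c, hc⟩ := hn
    exact ⟨∑ i, c i, c, hc, rfl⟩
  exact Nat.sSup_mem hne (bdd hpos hm n)

lemma ord_mul_le (hpos : 0 < g 0) (hm : StrictMono g) {n : ℕ} (hn : n ∈ Sg g) :
    ordOf g n * g 0 ≤ n := by
  obtain ⟨c, hc, hr⟩ := ord_spec hpos hm hn
  rw [← hr, ← hc, Finset.sum_mul]
  exact Finset.sum_le_sum fun i _ => Nat.mul_le_mul_left _ (hm.monotone (Fin.zero_le i))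

lemma split (f : Fin (t+1) → ℕ) : ∑ i, f i = f 0 + ∑ i ∈ Finset.univ.erase 0, f i :=
  (Finset.add_sum_erase Finset.univ f (Finset.mem_univ 0)).symm

lemma add_e_mem {n : ℕ} (hn : n ∈ Sg g) : n + g 0 ∈ Sg g := by
  obtain ⟨c, hc⟩ := hn
  refine ⟨fun i => if i = 0 then c 0 + 1 else c i, ?_⟩
  have hcong : ∑ i ∈ Finset.univ.erase 0, (if i = 0 then c 0 + 1 else c i) * g i
      = ∑ i ∈ Finset.univ.erase 0, c i * g i :=
    Finset.sum_congr rfl fun i hi => by rw [if_neg (Finset.ne_of_mem_erase hi)]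
  rw [split] at hc ⊢
  simp only [hcong, reduceIte]
  generalize ∑ i ∈ Finset.univ.erase (0 : Fin (t+1)), c i * g i = X at *
  ring_nf
  omega

lemma ord_step (hpos : 0 < g 0) (hm : StrictMono g) {n : ℕ} (hn : n ∈ Sg g) :
    ordOf g n + 1 ≤ ordOf g (n + g 0) := by
  obtain ⟨c, hc, hr⟩ := ord_spec hpos hm hn
  refine le_ord hpos hm (c := fun i => if i = 0 then c 0 + 1 else c i) ?_ ?_
  · show _ = _
    have hc' : ∑ i, c i * g i = n := hc
    have hcong : ∑ i ∈ Finset.univ.erase 0, (if i = 0 then c 0 + 1 else c i) * g i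
        = ∑ i ∈ Finset.univ.erase 0, c i * g i :=
      Finset.sum_congr rfl fun i hi => by rw [if_neg (Finset.ne_of_mem_erase hi)]
    rw [split] at hc' ⊢
    simp only [hcong, reduceIte]
    generalize ∑ i ∈ Finset.univ.erase (0 : Fin (t+1)), c i * g i = X at *
    ring_nf
    omega
  · have hcong : (∑ i ∈ Finset.univ.erase 0, if i = 0 then c 0 + 1 else c i)
        = ∑ i ∈ Finset.univ.erase 0, c i :=
      Finset.sum_congr rfl fun i hi => by rw [if_neg (Finset.ne_of_mem_erase hi)]
    rw [split] at hr ⊢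
    simp only [hcong, reduceIte]
    omega

lemma adj_step (hpos : 0 < g 0) (hm : StrictMono g) {n : ℕ} (hn : n ∈ Sg g) :
    adj g (n + g 0) ≤ adj g n := by
  have h1 := ord_step hpos hm hn
  have h2 := ord_mul_le hpos hm hn
  unfold adj
  have h3 : (ordOf g n + 1) * g 0 ≤ ordOf g (n + g 0) * g 0 := Nat.mul_le_mul_right _ h1
  generalize ordOf g (n + g 0) * g 0 = X at *
  generalize hy : ordOf g n * g 0 = Y at *
  have : (ordOf g n + 1) * g 0 = Y + g 0 := by rw [← hy]; ring
  omega

end Helpers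

section Main

variable {t : ℕ} {g : Fin (t + 1) → ℕ}

lemma Sg_add {h : Fin (t+1) → ℕ} {a b : ℕ} (ha : a ∈ Sg h) (hb : b ∈ Sg h) :
    a + b ∈ Sg h := by
  obtain ⟨c, hc⟩ := ha
  obtain ⟨c', hc'⟩ := hb
  refine ⟨c + c', ?_⟩
  simp only [Pi.add_apply, add_mul, Finset.sum_add_distrib, hc, hc']

lemma mul_gen_mem (h : Fin (t+1) → ℕ) (k : ℕ) (i₀ : Fin (t+1)) :
    k * h i₀ ∈ Sg h := by
  refine ⟨fun j => if j = i₀ then k else 0, ?_⟩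
  simp [ite_mul, Finset.sum_ite_eq']

lemma term_split (hm : StrictMono g) (c : Fin (t+1) → ℕ) :
    ∑ i, c i * g i = (∑ i, (if i = 0 then 0 else c i) * blowD g i) + (∑ i, c i) * g 0 := by
  rw [Finset.sum_mul, ← Finset.sum_add_distrib]
  refine Finset.sum_congr rfl fun i _ => ?_
  by_cases h : i = 0
  · simp [h, blowD]
  · have hlt : g 0 ≤ g i := hm.monotone (Fin.zero_le i)
    simp only [if_neg h, blowD]
    rw [← Nat.mul_add, Nat.sub_add_cancel hlt]

lemma adj_mem_blow (hpos : 0 < g 0) (hm : StrictMono g) {n : ℕ} (hn : n ∈ Sg g) :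
    adj g n ∈ Sg (blowD g) := by
  obtain ⟨c, hc, hr⟩ := ord_spec hpos hm hn
  have hsplit := term_split hm c
  rw [hc, hr] at hsplit
  refine ⟨fun i => if i = 0 then 0 else c i, ?_⟩
  show ∑ i, (if i = 0 then 0 else c i) * blowD g i = adj g n
  unfold adj
  omega

lemma mem_add_mul {n : ℕ} (hn : n ∈ Sg g) (k : ℕ) : n + k * g 0 ∈ Sg g := by
  induction k with
  | zero => simpa using hn
  | succ k ih =>
      have := add_e_mem ih
      have heq : n + (k + 1) * g 0 = n + k * g 0 + g 0 := by ring
      rwa [heq]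

lemma adj_add_mul (hpos : 0 < g 0) (hm : StrictMono g) {m : ℕ} (hmem : m ∈ Sg g) (k : ℕ) :
    adj g (m + k * g 0) ≤ adj g m := by
  induction k with
  | zero => simp
  | succ k ih =>
      have h1 : adj g (m + k * g 0 + g 0) ≤ adj g (m + k * g 0) :=
        adj_step hpos hm (mem_add_mul hmem k)
      have heq : m + (k + 1) * g 0 = m + k * g 0 + g 0 := by ring
      rw [heq]
      exact le_trans h1 ih

lemma adj_le_min (hpos : 0 < g 0) (hm : StrictMono g) {n : ℕ} (hn : n ∈ Sg g) :
    adj g n ≤ sInf {s | s ∈ Sg g ∧ s % g 0 = n % g 0} := by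
  set m := sInf {s | s ∈ Sg g ∧ s % g 0 = n % g 0} with hmdef
  have hmem : m ∈ {s | s ∈ Sg g ∧ s % g 0 = n % g 0} := Nat.sInf_mem ⟨n, hn, rfl⟩
  have hle : m ≤ n := Nat.sInf_le ⟨hn, rfl⟩
  obtain ⟨k, hk⟩ := (Nat.modEq_iff_dvd' hle).mp (hmem.2 : m % g 0 = n % g 0)
  have hn' : n = m + k * g 0 := by
    have : g 0 * k = k * g 0 := Nat.mul_comm _ _
    omega
  calc adj g n = adj g (m + k * g 0) := by rw [hn']
    _ ≤ adj g m := adj_add_mul hpos hm hmem.1 k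
    _ ≤ m := Nat.sub_le _ _

theorem stmt6' (hS : StrictMono g) (hpos : 0 < g 0) :
    (adj g '' Sg g).Finite ∧
      Ap (blowD g) (g 0) ⊆ adj g '' Sg g ∧
      adj g '' Sg g ⊆ Sg (blowD g) := by
  have hm := hS
  refine ⟨?_, ?_, ?_⟩
  · -- finiteness
    set K := Finset.sup (Finset.range (g 0))
      (fun v => sInf {s | s ∈ Sg g ∧ s % g 0 = v}) with hK
    refine Set.Finite.subset (Set.finite_Iic K) ?_
    rintro _ ⟨n, hn, rfl⟩
    have h1 := adj_le_min hpos hm hn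
    have h2 : sInf {s | s ∈ Sg g ∧ s % g 0 = n % g 0} ≤ K :=
      Finset.le_sup (f := fun v => sInf {s | s ∈ Sg g ∧ s % g 0 = v})
        (Finset.mem_range.mpr (Nat.mod_lt n hpos))
    exact le_trans h1 h2
  · -- Ap ⊆ adj '' S
    rintro w ⟨⟨d, hd⟩, hna⟩
    have hd0 : d 0 = 0 := by
      by_contra h0
      refine hna ⟨∑ i, (fun i => if i = 0 then d 0 - 1 else d i) i * blowD g i,
        ⟨_, rfl⟩, ?_⟩
      have hcong : ∑ i ∈ Finset.univ.erase 0, (if i = 0 then d 0 - 1 else d i) * blowD g i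
          = ∑ i ∈ Finset.univ.erase 0, d i * blowD g i :=
        Finset.sum_congr rfl fun i hi => by rw [if_neg (Finset.ne_of_mem_erase hi)]
      rw [← hd, split (fun i => d i * blowD g i)]
      rw [split (fun i => (if i = 0 then d 0 - 1 else d i) * blowD g i)]
      simp only [hcong, reduceIte]
      have hb0 : blowD g 0 = g 0 := if_pos rfl
      rw [hb0]
      have : (d 0 - 1) * g 0 + g 0 = d 0 * g 0 := by
        have h1 : (d 0 - 1) * g 0 + g 0 = (d 0 - 1 + 1) * g 0 := by ring
        rw [h1, Nat.sub_add_cancel (Nat.one_le_iff_ne_zero.mpr h0)]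
      omega
    set r := ∑ i, d i with hr
    set n := ∑ i, d i * g i with hn
    have hnS : n ∈ Sg g := ⟨d, rfl⟩
    have hQ : (∑ i, (if i = 0 then 0 else d i) * blowD g i) = w := by
      rw [← hd]
      refine Finset.sum_congr rfl fun i _ => ?_
      by_cases h : i = 0
      · simp [h, hd0]
      · rw [if_neg h]
    have hsplit : n = w + r * g 0 := by
      have := term_split hm d
      rw [hQ] at this
      exact this
    have hrle : r ≤ ordOf g n := le_ord hpos hm (c := d) rfl hr.symm
    have hord : ordOf g n = r := by
      by_contra hne
      have hRgt : r < ordOf g n := lt_of_le_of_ne hrle (Ne.symm hne)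
      obtain ⟨c, hc, hRr⟩ := ord_spec hpos hm hnS
      set R := ordOf g n with hRdef
      have hsplit2 : n = (∑ i, (if i = 0 then 0 else c i) * blowD g i) + R * g 0 := by
        have := term_split hm c
        rw [hc, hRr] at this
        exact this
      set P := ∑ i, (if i = 0 then 0 else c i) * blowD g i with hP
      have hPmem : P ∈ Sg (blowD g) := ⟨_, rfl⟩
      have hw : w = P + (R - r - 1) * g 0 + g 0 := by
        have h1 : w + r * g 0 = P + R * g 0 := by rw [← hsplit, ← hsplit2]
        have h2 : (R - r - 1) * g 0 + g 0 + r * g 0 = R * g 0 := by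
          have hs : R - r - 1 + 1 + r = R := by omega
          calc (R - r - 1) * g 0 + g 0 + r * g 0 = (R - r - 1 + 1 + r) * g 0 := by ring
            _ = R * g 0 := by rw [hs]
        omega
      refine hna ⟨P + (R - r - 1) * g 0, ?_, hw⟩
      have : (R - r - 1) * g 0 = (R - r - 1) * blowD g 0 := by
        rw [show blowD g 0 = g 0 from if_pos rfl]
      rw [this]
      exact Sg_add hPmem (mul_gen_mem (blowD g) _ 0)
    refine ⟨n, hnS, ?_⟩
    unfold adj
    rw [hord]
    omega
  · -- adj '' S ⊆ B
    rintro _ ⟨n, hn, rfl⟩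
    exact adj_mem_blow hpos hm hn



/-- Corollary 3.6: `adj(S)` is finite and `Ap(B;e) ⊆ adj(S) ⊆ B`. -/
theorem stmt6 {t : ℕ} (g : Fin (t + 1) → ℕ) (hS : IsNumSgp g) :
    (adj g '' Sg g).Finite ∧
      Ap (blowD g) (g 0) ⊆ adj g '' Sg g ∧
      adj g '' Sg g ⊆ Sg (blowD g) :=
  stmt6' hS.mono hS.pos
end Main
end

section
/- Let S be a numerical semigroup with multiplicity e and blowup B with generating set D. Suppose adj(S) = Ap(B; e). Then d_max(S) = max{ d(f; D) : f ∈ Ap(B; e) }, where d(f;D) is the number of D-factorizations of f. -/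
open Finset

namespace Stmt7Aux

variable {t : ℕ}

/-- tail of a coefficient vector -/
def tl (c : Fin (t + 1) → ℕ) : Fin (t + 1) → ℕ := fun i => if i = 0 then 0 else c i

lemma tl_succ (c : Fin (t + 1) → ℕ) (i : Fin t) : tl c i.succ = c i.succ := by
  simp [tl, Fin.succ_ne_zero]

lemma sum_split (g : Fin (t + 1) → ℕ) (hg : ∀ i, g 0 ≤ g i) (c : Fin (t + 1) → ℕ) :
    ∑ i, c i * g i = (∑ i, c i) * g 0 + ∑ i, tl c i * blowD g i := by
  rw [Fin.sum_univ_succ (fun i => c i * g i), Fin.sum_univ_succ c,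
    Fin.sum_univ_succ (fun i => tl c i * blowD g i)]
  have h0 : tl c 0 = 0 := rfl
  have hD : ∀ i : Fin t, blowD g i.succ = g i.succ - g 0 := fun i => by
    simp [blowD, Fin.succ_ne_zero]
  simp only [tl_succ, hD, h0, zero_mul, zero_add]
  have key : ∀ i : Fin t, c i.succ * g i.succ = c i.succ * g 0 + c i.succ * (g i.succ - g 0) := by
    intro i
    rw [← Nat.mul_add, Nat.add_sub_cancel' (hg i.succ)]
  rw [Finset.sum_congr rfl fun i _ => key i, Finset.sum_add_distrib, add_mul, Finset.sum_mul]
  ring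

lemma sum_le (g : Fin (t + 1) → ℕ) (hg : ∀ i, 0 < g i) {n : ℕ} {c : Fin (t + 1) → ℕ}
    (hc : c ∈ Fac g n) : ∑ i, c i ≤ n := by
  calc ∑ i, c i ≤ ∑ i, c i * g i :=
        Finset.sum_le_sum fun i _ => Nat.le_mul_of_pos_right _ (hg i)
    _ = n := hc

lemma coeff_le (g : Fin (t + 1) → ℕ) (hg : ∀ i, 0 < g i) {n : ℕ} {c : Fin (t + 1) → ℕ}
    (hc : c ∈ Fac g n) (i : Fin (t + 1)) : c i ≤ n := by
  have h1 : c i ≤ c i * g i := Nat.le_mul_of_pos_right _ (hg i)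
  have h2 : c i * g i ≤ ∑ j, c j * g j :=
    Finset.single_le_sum (f := fun j => c j * g j) (fun j _ => Nat.zero_le _) (Finset.mem_univ i)
  have h3 : (∑ j, c j * g j) = n := hc
  omega

lemma fac_finite (g : Fin (t + 1) → ℕ) (hg : ∀ i, 0 < g i) (n : ℕ) : (Fac g n).Finite := by
  apply Set.Finite.subset (Set.Finite.pi fun _ : Fin (t + 1) => Set.finite_Iic n)
  intro c hc
  simp only [Set.mem_pi, Set.mem_univ, Set.mem_Iic, forall_true_left]
  exact fun i => coeff_le g hg hc i

lemma len_bdd (g : Fin (t + 1) → ℕ) (hg : ∀ i, 0 < g i) (n : ℕ) :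
    BddAbove {r | ∃ c ∈ Fac g n, ∑ i, c i = r} := by
  refine ⟨n, ?_⟩
  rintro r ⟨c, hc, rfl⟩
  exact sum_le g hg hc

/-- every D-factorization of an Apéry element avoids the generator `e`. -/
lemma ap_c0 (g : Fin (t + 1) → ℕ) {f : ℕ} (hf : f ∈ Ap (blowD g) (g 0))
    {c : Fin (t + 1) → ℕ} (hc : c ∈ Fac (blowD g) f) : c 0 = 0 := by
  by_contra h0
  apply hf.2
  have hcf : (∑ i, c i * blowD g i) = f := hc
  rw [Fin.sum_univ_succ] at hcf
  have hD0 : blowD g 0 = g 0 := by simp [blowD]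
  obtain ⟨m, hm⟩ : ∃ m, c 0 = m + 1 := ⟨c 0 - 1, by omega⟩
  refine ⟨∑ i, (Function.update c 0 m) i * blowD g i, ⟨_, rfl⟩, ?_⟩
  rw [Fin.sum_univ_succ]
  have hu0 : Function.update c 0 m 0 = m := Function.update_self _ _ _
  have hus : ∀ i : Fin t, Function.update c 0 m i.succ = c i.succ :=
    fun i => Function.update_of_ne (Fin.succ_ne_zero i) _ _
  simp only [hu0, hus]
  rw [hD0] at hcf ⊢
  rw [hm] at hcf
  have : (m + 1) * g 0 = m * g 0 + g 0 := by ring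
  omega

end Stmt7Aux
namespace Stmt7Aux

lemma ord_spec (g : Fin (t + 1) → ℕ) (hg : ∀ i, 0 < g i) {n : ℕ} (hn : n ∈ Sg g) :
    ∃ c ∈ Fac g n, ∑ i, c i = ordOf g n := by
  have hne : {r | ∃ c ∈ Fac g n, ∑ i, c i = r}.Nonempty := by
    obtain ⟨c, hc⟩ := hn
    exact ⟨∑ i, c i, c, hc, rfl⟩
  exact Nat.sSup_mem hne (len_bdd g hg n)

lemma lem1 (g : Fin (t + 1) → ℕ) (hS : IsNumSgp g)
    (h : adj g '' Sg g = Ap (blowD g) (g 0)) {n : ℕ} (hn : n ∈ Sg g) :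
    ∃ f ∈ Ap (blowD g) (g 0), dmaxEl g n ≤ denum (blowD g) f := by
  have hge : ∀ i, g 0 ≤ g i := fun i => hS.mono.monotone (Fin.zero_le i)
  have hD1 : ∀ i, 0 < blowD g i := by
    intro i
    by_cases hi : i = 0
    · simpa [blowD, hi] using hS.pos
    · have : g 0 < g i := hS.mono (Fin.pos_of_ne_zero hi)
      simpa [blowD, hi] using Nat.sub_pos_of_lt this
  refine ⟨adj g n, by rw [← h]; exact ⟨n, hn, rfl⟩, ?_⟩
  unfold dmaxEl denum
  apply Set.ncard_le_ncard_of_injOn tl ?_ ?_ (fac_finite (blowD g) hD1 _)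
  · rintro c ⟨hc1, hc2⟩
    have hsplit := sum_split g hge c
    have hc1' : (∑ i, c i * g i) = n := hc1
    show (∑ i, tl c i * blowD g i) = adj g n
    unfold adj
    rw [← hc2]
    omega
  · rintro c ⟨hc1, hc2⟩ c' ⟨hc1', hc2'⟩ heq
    have hsucc : ∀ i : Fin t, c i.succ = c' i.succ := by
      intro i
      have := congrFun heq i.succ
      simpa [tl_succ] using this
    have h0 : c 0 = c' 0 := by
      rw [Fin.sum_univ_succ] at hc2 hc2'
      have hts : ∑ i : Fin t, c i.succ = ∑ i : Fin t, c' i.succ :=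
        Finset.sum_congr rfl fun i _ => hsucc i
      omega
    funext i
    rcases Fin.eq_zero_or_eq_succ i with rfl | ⟨j, rfl⟩
    exacts [h0, hsucc j]

lemma lem2 (g : Fin (t + 1) → ℕ) (hS : IsNumSgp g) {f : ℕ}
    (hf : f ∈ Ap (blowD g) (g 0)) :
    ∃ n ∈ Sg g, denum (blowD g) f ≤ dmaxEl g n := by
  have hg1 : ∀ i, 0 < g i := fun i => lt_of_lt_of_le hS.pos (hS.mono.monotone (Fin.zero_le i))
  have hge : ∀ i, g 0 ≤ g i := fun i => hS.mono.monotone (Fin.zero_le i)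
  have hD1 : ∀ i, 0 < blowD g i := by
    intro i
    by_cases hi : i = 0
    · simpa [blowD, hi] using hS.pos
    · have : g 0 < g i := hS.mono (Fin.pos_of_ne_zero hi)
      simpa [blowD, hi] using Nat.sub_pos_of_lt this
  obtain ⟨c₀, hc₀⟩ := hf.1
  have hc₀f : c₀ ∈ Fac (blowD g) f := hc₀
  set ψ : (Fin (t + 1) → ℕ) → (Fin (t + 1) → ℕ) :=
    fun c i => if i = 0 then f - ∑ j, c j else c i with hψ
  set N : ℕ := f + f * g 0 with hN
  have key : ∀ c ∈ Fac (blowD g) f, ψ c ∈ Fac g N ∧ ∑ i, ψ c i = f := by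
    intro c hc
    have h0 : c 0 = 0 := ap_c0 g hf hc
    have hle : ∑ i, c i ≤ f := sum_le (blowD g) hD1 hc
    have htl : tl (ψ c) = c := by
      funext i
      by_cases hi : i = 0
      · simp [tl, hψ, hi, h0.symm]
      · simp [tl, hψ, hi]
    have hsum : ∑ i, ψ c i = f := by
      rw [Fin.sum_univ_succ]
      have hs0 : ψ c 0 = f - ∑ j, c j := by simp [hψ]
      have hss : ∀ i : Fin t, ψ c i.succ = c i.succ := by
        intro i; simp [hψ, Fin.succ_ne_zero]
      rw [hs0, Finset.sum_congr rfl fun i _ => hss i]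
      have hc' : ∑ i, c i = c 0 + ∑ i : Fin t, c i.succ := Fin.sum_univ_succ c
      omega
    have hsplit := sum_split g hge (ψ c)
    rw [htl, hsum] at hsplit
    have hcf : (∑ i, c i * blowD g i) = f := hc
    constructor
    · show (∑ i, ψ c i * g i) = N
      rw [hsplit, hcf, hN]
      ring
    · exact hsum
  have hNmem : N ∈ Sg g := ⟨ψ c₀, (key c₀ hc₀f).1⟩
  have hord : ordOf g N = f := by
    unfold ordOf
    apply le_antisymm
    · refine csSup_le ?_ ?_
      · exact ⟨f, ψ c₀, (key c₀ hc₀f).1, (key c₀ hc₀f).2⟩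
      rintro r ⟨c, hc, rfl⟩
      by_contra hr
      push_neg at hr
      apply hf.2
      have hsplit := sum_split g hge c
      have hcn : (∑ i, c i * g i) = N := hc
      rw [hsplit] at hcn
      set L := ∑ i, c i with hL
      set T := ∑ i, tl c i * blowD g i with hT
      have hb : T + (L - f - 1) * g 0 ∈ Sg (blowD g) := by
        refine ⟨fun i => tl c i + (Pi.single (0 : Fin (t + 1)) (L - f - 1) : Fin (t + 1) → ℕ) i, ?_⟩
        rw [Finset.sum_congr rfl fun i (_ : i ∈ Finset.univ) => add_mul _ _ _,
          Finset.sum_add_distrib]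
        congr 1
        rw [Fin.sum_univ_succ]
        have hz : ∀ i : Fin t,
            (Pi.single (0 : Fin (t + 1)) (L - f - 1) : Fin (t + 1) → ℕ) i.succ = 0 :=
          fun i => Pi.single_eq_of_ne (Fin.succ_ne_zero i) _
        simp [hz, Pi.single_eq_same, blowD]
      refine ⟨_, hb, ?_⟩
      obtain ⟨m, hm⟩ : ∃ m, L = f + 1 + m := ⟨L - f - 1, by omega⟩
      have hm' : L - f - 1 = m := by omega
      rw [hm'] at *
      rw [hm] at hcn
      have hexp : (f + 1 + m) * g 0 = f * g 0 + g 0 + m * g 0 := by ring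
      rw [hN] at hcn
      omega
    · exact le_csSup (len_bdd g hg1 N) ⟨ψ c₀, (key c₀ hc₀f).1, (key c₀ hc₀f).2⟩
  refine ⟨N, hNmem, ?_⟩
  unfold denum dmaxEl
  apply Set.ncard_le_ncard_of_injOn ψ ?_ ?_
    ((fac_finite g hg1 N).subset (Set.sep_subset _ _))
  · intro c hc
    exact ⟨(key c hc).1, (key c hc).2.trans hord.symm⟩
  · intro c hc c' hc' heq
    have h0 : c 0 = 0 := ap_c0 g hf hc
    have h0' : c' 0 = 0 := ap_c0 g hf hc'
    funext i
    by_cases hi : i = 0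
    · rw [hi, h0, h0']
    · have := congrFun heq i
      simpa [hψ, hi] using this

lemma sSup_dom {A B : Set ℕ} (h1 : ∀ a ∈ A, ∃ b ∈ B, a ≤ b)
    (h2 : ∀ b ∈ B, ∃ a ∈ A, b ≤ a) : sSup A = sSup B := by
  by_cases hB : BddAbove B
  · have hA : BddAbove A := by
      obtain ⟨M, hM⟩ := hB
      exact ⟨M, fun a ha => (h1 a ha).elim fun b hb => le_trans hb.2 (hM hb.1)⟩
    rcases A.eq_empty_or_nonempty with rfl | hAne
    · rcases B.eq_empty_or_nonempty with rfl | hBne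
      · rfl
      · obtain ⟨b, hb⟩ := hBne
        obtain ⟨a, ha, -⟩ := h2 b hb
        exact absurd ha (Set.notMem_empty a)
    · have hBne : B.Nonempty := by
        obtain ⟨a, ha⟩ := hAne
        obtain ⟨b, hb, -⟩ := h1 a ha
        exact ⟨b, hb⟩
      apply le_antisymm
      · exact csSup_le hAne fun a ha =>
          (h1 a ha).elim fun b hb => le_trans hb.2 (le_csSup hB hb.1)
      · exact csSup_le hBne fun b hb =>
          (h2 b hb).elim fun a ha => le_trans ha.2 (le_csSup hA ha.1)
  · have hA : ¬BddAbove A := by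
      rintro ⟨M, hM⟩
      exact hB ⟨M, fun b hb => (h2 b hb).elim fun a ha => le_trans ha.2 (hM ha.1)⟩
    rw [csSup_of_not_bddAbove hA, csSup_of_not_bddAbove hB]

end Stmt7Aux

/-- If `adj(S) = Ap(B;e)`, then `d_max(S) = max { d(f; D) : f ∈ Ap(B;e) }`. -/
theorem stmt7 {t : ℕ} (g : Fin (t + 1) → ℕ) (hS : IsNumSgp g)
    (h : adj g '' Sg g = Ap (blowD g) (g 0)) :
    dmax g = sSup {m | ∃ f ∈ Ap (blowD g) (g 0), denum (blowD g) f = m} := by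
  unfold dmax
  apply Stmt7Aux.sSup_dom
  · rintro a ⟨n, hn, rfl⟩
    obtain ⟨f, hfAp, hle⟩ := Stmt7Aux.lem1 g hS h hn
    exact ⟨denum (blowD g) f, ⟨f, hfAp, rfl⟩, hle⟩
  · rintro b ⟨f, hf, rfl⟩
    obtain ⟨n, hn, hle⟩ := Stmt7Aux.lem2 g hS hf
    exact ⟨dmaxEl g n, ⟨n, hn, rfl⟩, hle⟩
end

section
/- Let S be a numerical semigroup, u ∈ S nonzero, and g ∈ Ap(S; u). If there exists g′ ∈ Ap(S;u) with f = g + g′ ∈ Ap(S;u), then for any fixed generating set G of S, the denumerant satisfies d(f; G) ≥ d(g; G). -/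
open Finset

/-- If `g, g', g + g'` all lie in the Apery set `Ap(S; u)`, then
`d(g + g'; G) ≥ d(g; G)` for any generating tuple `G` of `S`. -/
theorem stmt8 {t : ℕ} (G : Fin (t + 1) → ℕ) (hpos : ∀ i, 0 < G i)
    (hgcd : Finset.gcd Finset.univ G = 1)
    (u : ℕ) (hu : u ∈ Sg G) (hu0 : u ≠ 0)
    (a b : ℕ) (ha : a ∈ Ap G u) (hb : b ∈ Ap G u) (hab : a + b ∈ Ap G u) :
    denum G a ≤ denum G (a + b) := by
  obtain ⟨cb, hcb⟩ := hb.1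
  have hfin : (Fac G (a + b)).Finite := by
    apply Set.Finite.subset (Set.Finite.pi (fun i : Fin (t+1) => Set.finite_Iic (a + b)))
    intro c hc
    intro i _
    have h1 : c i * G i ≤ a + b := by
      rw [← hc]
      exact Finset.single_le_sum (f := fun j => c j * G j) (fun j _ => Nat.zero_le _)
        (Finset.mem_univ i)
    have : c i ≤ c i * G i := Nat.le_mul_of_pos_right _ (hpos i)
    exact le_trans this h1
  have himg : (fun c => c + cb) '' (Fac G a) ⊆ Fac G (a + b) := by
    rintro _ ⟨c, hc, rfl⟩
    simp only [Fac, Set.mem_setOf_eq] at hc ⊢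
    have : ∑ i, (c + cb) i * G i = ∑ i, (c i * G i + cb i * G i) := by
      simp [add_mul]
    rw [this, Finset.sum_add_distrib, hc, hcb]
  calc denum G a = ((fun c => c + cb) '' (Fac G a)).ncard := by
        rw [Set.ncard_image_of_injective _ (add_left_injective cb)]
        rfl
    _ ≤ denum G (a + b) := Set.ncard_le_ncard himg hfin
end

section
/- Let S be a numerical semigroup and u ∈ S nonzero, with Ap(S; u) = {w₀ < w₁ < ⋯ < w_{u−1}}. Then S is symmetric if and only if wᵢ + w_j = w_{u−1} whenever i + j = u − 1. -/
open Finset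

section Helpers

variable {T : Set ℕ} {u : ℕ} {w : Fin u → ℕ}

lemma w_mem (hrange : Set.range w = ApS T u) (i : Fin u) : w i ∈ T := by
  have : w i ∈ ApS T u := hrange ▸ Set.mem_range_self i
  exact this.1

lemma w_notap (hrange : Set.range w = ApS T u) (i : Fin u) : ¬ ∃ b ∈ T, w i = b + u := by
  have : w i ∈ ApS T u := hrange ▸ Set.mem_range_self i
  exact this.2

lemma mem_rep (hT : IsNumSemigroup T) (hu0 : u ≠ 0)
    (hrange : Set.range w = ApS T u) :
    ∀ n, n ∈ T → ∃ i k, n = w i + k * u := by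
  intro n
  induction n using Nat.strong_induction_on with
  | _ n ih =>
    intro hn
    by_cases h : ∃ b ∈ T, n = b + u
    · obtain ⟨b, hb, rfl⟩ := h
      obtain ⟨i, k, hk⟩ := ih b (by omega) hb
      exact ⟨i, k + 1, by rw [hk]; ring⟩
    · have : n ∈ ApS T u := ⟨hn, h⟩
      rw [← hrange] at this
      obtain ⟨i, hi⟩ := this
      exact ⟨i, 0, by omega⟩

lemma rep_mem (hT : IsNumSemigroup T) (hu : u ∈ T)
    (hrange : Set.range w = ApS T u) (i : Fin u) (k : ℕ) : w i + k * u ∈ T := by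
  induction k with
  | zero => simpa using w_mem hrange i
  | succ k ihk =>
      have := hT.add_mem _ ihk _ hu
      have h : w i + (k + 1) * u = w i + k * u + u := by ring
      rw [h]; exact this

lemma res_inj (hT : IsNumSemigroup T) (hu : u ∈ T) (hu0 : u ≠ 0)
    (hw : StrictMono w) (hrange : Set.range w = ApS T u)
    {i j : Fin u} (h : w i % u = w j % u) : i = j := by
  by_contra hne
  wlog hij : w i < w j generalizing i j
  · exact this h.symm (Ne.symm hne) (by
      rcases lt_or_gt_of_ne (fun he => hne (hw.injective he)) with h1 | h1
      · omega
      · exact h1)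
  · have h' : Nat.ModEq u (w i) (w j) := h
    have hdvd : u ∣ w j - w i := (Nat.modEq_iff_dvd' (le_of_lt hij)).1 h'
    obtain ⟨k, hk⟩ := hdvd
    cases k with
    | zero => omega
    | succ k =>
      refine w_notap hrange j ⟨w i + k * u, rep_mem hT hu hrange i k, ?_⟩
      have h2 : w j = w i + u * (k + 1) := by omega
      rw [h2]; ring

lemma mem_char (hT : IsNumSemigroup T) (hu : u ∈ T) (hu0 : u ≠ 0)
    (hw : StrictMono w) (hrange : Set.range w = ApS T u)
    {i : Fin u} {n : ℕ} (h : w i % u = n % u) : n ∈ T ↔ w i ≤ n := by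
  constructor
  · intro hn
    obtain ⟨j, k, hjk⟩ := mem_rep hT hu0 hrange n hn
    have hres : w j % u = n % u := by
      subst hjk; simp [Nat.add_mul_mod_self_right]
    have : i = j := res_inj hT hu hu0 hw hrange (h.trans hres.symm)
    subst this; omega
  · intro hle
    have h' : Nat.ModEq u (w i) n := h
    obtain ⟨k, hk⟩ := (Nat.modEq_iff_dvd' hle).1 h'
    have hc : u * k = k * u := Nat.mul_comm u k
    have : n = w i + k * u := by omega
    rw [this]; exact rep_mem hT hu hrange i k

lemma res_surj (hT : IsNumSemigroup T) (hu : u ∈ T) (hu0 : u ≠ 0)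
    (hw : StrictMono w) (hrange : Set.range w = ApS T u) (n : ℕ) :
    ∃ i, w i % u = n % u := by
  have hpos : 0 < u := Nat.pos_of_ne_zero hu0
  set f : Fin u → Fin u := fun i => ⟨w i % u, Nat.mod_lt _ hpos⟩ with hf
  have hinj : Function.Injective f := by
    intro i j hij
    exact res_inj hT hu hu0 hw hrange (by simpa [hf, Fin.ext_iff] using hij)
  have hsurj : Function.Surjective f := Finite.surjective_of_injective hinj
  obtain ⟨i, hi⟩ := hsurj ⟨n % u, Nat.mod_lt _ hpos⟩
  exact ⟨i, by simpa [hf, Fin.ext_iff] using hi⟩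

lemma idx_le_w' (hw : StrictMono w) : ∀ v (hv : v < u), v ≤ w ⟨v, hv⟩ := by
  intro v
  induction v with
  | zero => intro hv; simp
  | succ v ihv =>
      intro hv
      have hv' : v < u := by omega
      have h1 := ihv hv'
      have h2 : w ⟨v, hv'⟩ < w ⟨v + 1, hv⟩ := hw (by simp [Fin.lt_def])
      omega

lemma idx_le_w (hw : StrictMono w) (i : Fin u) : (i : ℕ) ≤ w i := by
  have := idx_le_w' hw i.1 i.2
  simpa using this

lemma le_max' (hu0 : u ≠ 0) (hw : StrictMono w) (i : Fin u) :
    w i ≤ w ⟨u - 1, Nat.sub_one_lt hu0⟩ := by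
  apply hw.monotone
  simp only [Fin.le_def]
  omega

/-- Everything above `w_{u-1} - u` is in `T`. -/
lemma gt_mem (hT : IsNumSemigroup T) (hu : u ∈ T) (hu0 : u ≠ 0)
    (hw : StrictMono w) (hrange : Set.range w = ApS T u)
    {n : ℕ} (h : (w ⟨u - 1, Nat.sub_one_lt hu0⟩ : ℤ) - u < n) : n ∈ T := by
  obtain ⟨i, hi⟩ := res_surj hT hu hu0 hw hrange n
  rw [mem_char hT hu hu0 hw hrange hi]
  by_contra hlt
  push_neg at hlt
  have hi' : Nat.ModEq u (w i) n := hi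
  have hdvd : u ∣ w i - n := (Nat.modEq_iff_dvd' (le_of_lt hlt)).1 hi'.symm
  obtain ⟨k, hk⟩ := hdvd
  have hk0 : k ≠ 0 := by rintro rfl; omega
  have hle := le_max' hu0 hw i
  have : (w i : ℤ) - n = u * k := by zify [le_of_lt hlt] at hk; omega
  have hku : (u : ℤ) * 1 ≤ u * k := by
    apply mul_le_mul_of_nonneg_left _ (by positivity)
    exact_mod_cast Nat.one_le_iff_ne_zero.2 hk0
  have : (w ⟨u - 1, Nat.sub_one_lt hu0⟩ : ℤ) ≥ w i := by exact_mod_cast hle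
  omega

lemma frob_eq (hT : IsNumSemigroup T) (hu : u ∈ T) (hu0 : u ≠ 0)
    (hw : StrictMono w) (hrange : Set.range w = ApS T u) :
    Frob T = (w ⟨u - 1, Nat.sub_one_lt hu0⟩ : ℤ) - u := by
  set M : ℕ := w ⟨u - 1, Nat.sub_one_lt hu0⟩ with hM
  have hMu : (u : ℤ) - 1 ≤ M := by
    have := idx_le_w hw (⟨u - 1, Nat.sub_one_lt hu0⟩ : Fin u)
    simp only [← hM] at this
    push_cast
    omega
  have hmem : ¬ ZMem T ((M : ℤ) - u) := by
    rintro ⟨hge, hmem⟩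
    have htn : (((M : ℤ) - u).toNat : ℤ) = (M : ℤ) - u := Int.toNat_of_nonneg hge
    have hMge : u ≤ M := by omega
    have : ((M : ℤ) - u).toNat = M - u := by omega
    rw [this] at hmem
    exact w_notap hrange ⟨u - 1, Nat.sub_one_lt hu0⟩ ⟨M - u, hmem, by omega⟩
  have hub : ∀ z ∈ {z : ℤ | ¬ ZMem T z}, z ≤ (M : ℤ) - u := by
    intro z hz
    by_contra hgt
    push_neg at hgt
    have hz0 : 0 ≤ z := by omega
    refine hz ⟨hz0, gt_mem hT hu hu0 hw hrange ?_⟩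
    rw [Int.toNat_of_nonneg hz0]
    exact hgt
  refine le_antisymm (csSup_le ⟨_, hmem⟩ hub) (le_csSup ⟨_, hub⟩ hmem)

end Helpers

/-- Proposition 4.5, (1) ↔ (2): `S` is symmetric iff `wᵢ + w_j = w_{u-1}` whenever
`i + j = u - 1`, where `Ap(S;u) = {w₀ < w₁ < ⋯ < w_{u-1}}`. -/
theorem stmt9 (T : Set ℕ) (hT : IsNumSemigroup T) (u : ℕ) (hu : u ∈ T) (hu0 : u ≠ 0)
    (w : Fin u → ℕ) (hw : StrictMono w) (hrange : Set.range w = ApS T u) :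
    Symm T ↔
      ∀ i j : Fin u, (i : ℕ) + (j : ℕ) + 1 = u →
        w i + w j = w ⟨u - 1, by omega⟩ := by

  set M : ℕ := w ⟨u - 1, by omega⟩ with hM
  have hF : Frob T = (M : ℤ) - u := frob_eq hT hu hu0 hw hrange
  have hle : ∀ i, w i ≤ M := le_max' hu0 hw
  constructor
  · -- Symm → pairing
    intro hs
    -- first: for every i, M - w i ∈ ApS T u
    have key : ∀ i : Fin u, ∃ j : Fin u, w j = M - w i := by
      intro i
      have hwi : w i ∈ T := w_mem hrange i
      have h1 : M - w i ∈ T := by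
        have := (hs ((M : ℤ) - w i) ((w i : ℤ) - u) (by rw [hF]; ring)).2
        have hy : ¬ ZMem T ((w i : ℤ) - u) := by
          rintro ⟨hge, hmem⟩
          have hui : u ≤ w i := by omega
          have : ((w i : ℤ) - u).toNat = w i - u := by omega
          rw [this] at hmem
          exact w_notap hrange i ⟨w i - u, hmem, by omega⟩
        obtain ⟨-, hmem⟩ := this hy
        have hle' := hle i
        have : ((M : ℤ) - w i).toNat = M - w i := by omega
        rwa [this] at hmem
      have h2 : ¬ ∃ b ∈ T, M - w i = b + u := by
        rintro ⟨b, hb, hbe⟩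
        have hle' := hle i
        have := (hs (w i) b (by rw [hF]; push_cast; omega)).1 ⟨by positivity, by simpa using hwi⟩
        exact this ⟨by positivity, by simpa using hb⟩
      have : M - w i ∈ ApS T u := ⟨h1, h2⟩
      rw [← hrange] at this
      exact this
    intro i j hij
    -- define f k = M - w (rev k); show f = w via range_inj
    have hrev : ∀ k : Fin u, ((⟨u - 1 - (k : ℕ), by omega⟩ : Fin u) : ℕ) = u - 1 - (k : ℕ) := fun k => rfl
    set f : Fin u → ℕ := fun k => M - w ⟨u - 1 - (k : ℕ), by omega⟩ with hf
    have hfmono : StrictMono f := by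
      intro a b hab
      have h1 : (⟨u - 1 - (b : ℕ), by omega⟩ : Fin u) < ⟨u - 1 - (a : ℕ), by omega⟩ := by
        simp only [Fin.lt_def]
        have := a.isLt
        have := b.isLt
        have : (a : ℕ) < b := hab
        omega
      have h3 := hw h1
      have h2 : w ⟨u - 1 - (b : ℕ), by omega⟩ < M := by
        rw [hM]
        apply hw
        simp only [Fin.lt_def]
        have := a.isLt
        have := b.isLt
        have : (a : ℕ) < b := hab
        omega
      show M - w ⟨u - 1 - (a : ℕ), by omega⟩ < M - w ⟨u - 1 - (b : ℕ), by omega⟩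
      omega
    have hrange_eq : Set.range f = Set.range w := by
      apply Set.Subset.antisymm
      · rintro x ⟨k, rfl⟩
        obtain ⟨j', hj'⟩ := key ⟨u - 1 - (k : ℕ), by omega⟩
        exact ⟨j', hj'⟩
      · rintro x ⟨k, rfl⟩
        obtain ⟨j', hj'⟩ := key k
        have hj'le := hle j'
        have hkle := hle k
        refine ⟨⟨u - 1 - (j' : ℕ), by omega⟩, ?_⟩
        simp only [hf]
        have hj'' : (⟨u - 1 - (u - 1 - (j' : ℕ)), by omega⟩ : Fin u) = j' := by
          have := j'.isLt
          exact Fin.ext (by simp; omega)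
        rw [hj'', hj']
        omega
    haveI : WellFoundedLT (Fin u) := inferInstance
    have hfw : f = w := (StrictMono.range_inj hfmono hw).1 hrange_eq
    have h4 : w j = M - w ⟨u - 1 - (j : ℕ), by omega⟩ := by
      conv_lhs => rw [← hfw]
    have hji : (⟨u - 1 - (j : ℕ), by omega⟩ : Fin u) = i := Fin.ext (by simp; omega)
    rw [hji] at h4
    have := hle i
    omega
  · -- pairing → Symm
    intro hp x y hxy
    rw [hF] at hxy
    have hMu : (u : ℤ) - 1 ≤ M := by
      have := idx_le_w hw (⟨u - 1, by omega⟩ : Fin u)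
      simp only [← hM] at this
      push_cast
      omega
    rcases lt_or_ge x 0 with hx | hx
    · have hy : 0 ≤ y := by omega
      have hyT : ZMem T y := by
        refine ⟨hy, gt_mem hT hu hu0 hw hrange ?_⟩
        rw [Int.toNat_of_nonneg hy]
        omega
      constructor
      · intro hxm; exact absurd hxm.1 (by omega)
      · intro h; exact absurd hyT h
    rcases lt_or_ge y 0 with hy | hy
    · have hxT : ZMem T x := by
        refine ⟨hx, gt_mem hT hu hu0 hw hrange ?_⟩
        rw [Int.toNat_of_nonneg hx]
        omega
      simp only [hxT, true_iff]
      rintro ⟨hy0, -⟩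
      omega
    · -- both nonnegative
      set n : ℕ := x.toNat with hn
      set m : ℕ := y.toNat with hm
      have hxn : (n : ℤ) = x := Int.toNat_of_nonneg hx
      have hym : (m : ℤ) = y := Int.toNat_of_nonneg hy
      have hnm : (n : ℤ) + m = (M : ℤ) - u := by omega
      obtain ⟨i, hi⟩ := res_surj hT hu hu0 hw hrange n
      have hjlt : u - 1 - (i : ℕ) < u := by omega
      set j : Fin u := ⟨u - 1 - (i : ℕ), hjlt⟩ with hj
      have hpair : w i + w j = M := by
        apply hp
        show (i : ℕ) + (u - 1 - (i : ℕ)) + 1 = u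
        have := i.isLt
        omega
      -- m ≡ w j mod u
      have hi'' : Nat.ModEq u (w i) n := hi
      have hdvd : (u : ℤ) ∣ (n : ℤ) - w i := by
        rcases le_total (w i) n with h' | h'
        · obtain ⟨k, hk⟩ := (Nat.modEq_iff_dvd' h').1 hi''
          zify [h'] at hk
          exact ⟨k, hk⟩
        · obtain ⟨k, hk⟩ := (Nat.modEq_iff_dvd' h').1 hi''.symm
          zify [h'] at hk
          exact ⟨-k, by rw [mul_neg]; omega⟩
      have hmwj : m % u = w j % u := by
        have hdvd2 : (u : ℤ) ∣ (m : ℤ) - w j := by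
          obtain ⟨k, hk⟩ := hdvd
          refine ⟨-1 - k, ?_⟩
          have : (w i : ℤ) + w j = M := by exact_mod_cast hpair
          linarith [hk]
        have := Int.emod_emod_of_dvd (m : ℤ) (dvd_refl (u : ℤ))
        have h3 : (m : ℤ) % u = (w j : ℤ) % u := Int.ModEq.symm (Int.modEq_iff_dvd.2 (by
          obtain ⟨k, hk⟩ := hdvd2
          exact ⟨k, by linarith⟩))
        exact_mod_cast h3
      have hnmem : n ∈ T ↔ w i ≤ n := mem_char hT hu hu0 hw hrange hi
      have hmmem : m ∈ T ↔ w j ≤ m := mem_char hT hu hu0 hw hrange hmwj.symm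
      have hpairZ : (w i : ℤ) + w j = M := by exact_mod_cast hpair
      have hiff : w i ≤ n ↔ ¬ (w j ≤ m) := by
        obtain ⟨k, hk⟩ := hdvd
        have hu' : (0 : ℤ) < u := by exact_mod_cast Nat.pos_of_ne_zero hu0
        constructor
        · intro h'
          intro h''
          have h1 : (w i : ℤ) ≤ n := by exact_mod_cast h'
          have h2 : (w j : ℤ) ≤ m := by exact_mod_cast h''
          omega
        · intro h'
          by_contra h''
          have h1 : (n : ℤ) < w i := by
            push_neg at h''
            exact_mod_cast h''
          have hk0 : k ≤ -1 := by nlinarith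
          have : (u : ℤ) * k ≤ u * (-1) := by
            apply mul_le_mul_of_nonneg_left hk0 (le_of_lt hu')
          have h2 : (w j : ℤ) ≤ m := by omega
          exact h' (by exact_mod_cast h2)
      constructor
      · rintro ⟨-, hxm⟩
        rw [← hn] at hxm
        rintro ⟨-, hym'⟩
        rw [← hm] at hym'
        exact (hiff.1 (hnmem.1 hxm)) (hmmem.1 hym')
      · intro h
        refine ⟨hx, ?_⟩
        rw [← hn, hnmem]
        apply hiff.2
        intro hwj
        exact h ⟨hy, by rw [← hm]; exact hmmem.2 hwj⟩
end

section
/- If S is a supersymmetric numerical semigroup with multiplicity e, then its blowup B is symmetric. -/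
open Finset

section AuxNS
variable {t : ℕ} {g : Fin (t + 1) → ℕ}

lemma aux_sg_add {a b : ℕ} (ha : a ∈ Sg g) (hb : b ∈ Sg g) : a + b ∈ Sg g := by
  obtain ⟨c, hc⟩ := ha; obtain ⟨d, hd⟩ := hb
  exact ⟨c + d, by simp [add_mul, Finset.sum_add_distrib, hc, hd]⟩

lemma aux_g_mem (i : Fin (t + 1)) : g i ∈ Sg g :=
  ⟨Pi.single i 1, by simp [Pi.single_apply, Finset.sum_ite_eq']⟩

lemma aux_len_le (he : 0 < g 0) (hm : Monotone g) {n : ℕ} {c : Fin (t+1) → ℕ}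
    (hc : c ∈ Fac g n) : ∑ i, c i ≤ n := by
  calc ∑ i, c i ≤ ∑ i, c i * g i :=
        Finset.sum_le_sum (fun i _ => Nat.le_mul_of_pos_right _ (lt_of_lt_of_le he (hm (Fin.zero_le i))))
  _ = n := hc

lemma aux_ord_isGreatest (he : 0 < g 0) (hm : Monotone g) {n : ℕ} (hn : n ∈ Sg g) :
    IsGreatest {r | ∃ c ∈ Fac g n, ∑ i, c i = r} (ordOf g n) := by
  have hbdd : BddAbove {r | ∃ c ∈ Fac g n, ∑ i, c i = r} :=
    ⟨n, fun r ⟨c, hc, hr⟩ => hr ▸ aux_len_le he hm hc⟩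
  have hne : {r | ∃ c ∈ Fac g n, ∑ i, c i = r}.Nonempty := by
    obtain ⟨c, hc⟩ := hn; exact ⟨∑ i, c i, c, hc, rfl⟩
  exact ⟨Nat.sSup_mem hne hbdd, fun r hr => le_csSup hbdd hr⟩

lemma aux_ord_spec (he : 0 < g 0) (hm : Monotone g) {n : ℕ} (hn : n ∈ Sg g) :
    ∃ c ∈ Fac g n, ∑ i, c i = ordOf g n := (aux_ord_isGreatest he hm hn).1

lemma aux_le_ord (he : 0 < g 0) (hm : Monotone g) {n : ℕ} {c : Fin (t+1) → ℕ}
    (hc : c ∈ Fac g n) : ∑ i, c i ≤ ordOf g n :=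
  (aux_ord_isGreatest he hm ⟨c, hc⟩).2 ⟨c, hc, rfl⟩

lemma aux_ord_mul_le (he : 0 < g 0) (hm : Monotone g) {n : ℕ} (hn : n ∈ Sg g) :
    ordOf g n * g 0 ≤ n := by
  obtain ⟨c, hc, hlen⟩ := aux_ord_spec he hm hn
  calc ordOf g n * g 0 = ∑ i, c i * g 0 := by rw [← Finset.sum_mul, hlen]
  _ ≤ ∑ i, c i * g i := Finset.sum_le_sum (fun i _ => Nat.mul_le_mul_left _ (hm (Fin.zero_le i)))
  _ = n := hc

end AuxNS
section AuxNS2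
variable {t : ℕ} {g : Fin (t + 1) → ℕ}

lemma aux_blow_sum (hm : Monotone g) (c : Fin (t+1) → ℕ) :
    ∑ i, c i * blowD g i + (∑ i : Fin t, c i.succ) * g 0 = ∑ i, c i * g i := by
  rw [Fin.sum_univ_succ (f := fun i => c i * blowD g i),
      Fin.sum_univ_succ (f := fun i => c i * g i)]
  have h0 : blowD g 0 = g 0 := if_pos rfl
  have key : ∑ i : Fin t, c i.succ * blowD g i.succ + (∑ i : Fin t, c i.succ) * g 0
      = ∑ i : Fin t, c i.succ * g i.succ := by
    rw [Finset.sum_mul, ← Finset.sum_add_distrib]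
    refine Finset.sum_congr rfl (fun i _ => ?_)
    have hge : g 0 ≤ g i.succ := hm (Fin.zero_le _)
    have hb : blowD g i.succ = g i.succ - g 0 := if_neg (Fin.succ_ne_zero i)
    rw [hb, ← Nat.mul_add, Nat.sub_add_cancel hge]
  rw [h0]
  omega

lemma aux_mem_B_iff (hm : Monotone g) {n : ℕ} :
    n ∈ Sg (blowD g) ↔ ∃ k, ∃ c ∈ Fac g (n + k * g 0), k ≤ ∑ i, c i := by
  constructor
  · rintro ⟨c, hc⟩
    refine ⟨∑ i : Fin t, c i.succ, c, ?_, ?_⟩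
    · show ∑ i, c i * g i = _
      rw [← aux_blow_sum hm c, hc]
    · rw [Fin.sum_univ_succ]; omega
  · rintro ⟨k, c, hc, hk⟩
    set m := ∑ i : Fin t, c i.succ with hmdef
    have hsum : ∑ i, c i = c 0 + m := by rw [Fin.sum_univ_succ]
    set c' : Fin (t+1) → ℕ := fun i => if i = 0 then c 0 + m - k else c i with hc'
    refine ⟨c', ?_⟩
    show ∑ i, c' i * blowD g i = n
    have h2 : ∑ i : Fin t, c' i.succ = m :=
      Finset.sum_congr rfl (fun i _ => by simp [hc', Fin.succ_ne_zero])
    have key := aux_blow_sum hm c'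
    rw [h2] at key
    have h3 : ∑ i, c' i * g i + k * g 0 = ∑ i, c i * g i + m * g 0 := by
      rw [Fin.sum_univ_succ (f := fun i => c' i * g i),
          Fin.sum_univ_succ (f := fun i => c i * g i)]
      have hs : ∑ i : Fin t, c' i.succ * g i.succ = ∑ i : Fin t, c i.succ * g i.succ :=
        Finset.sum_congr rfl (fun i _ => by simp [hc', Fin.succ_ne_zero])
      have h1 : c' 0 = c 0 + m - k := if_pos rfl
      have h4 : (c 0 + m - k) * g 0 + k * g 0 = c 0 * g 0 + m * g 0 := by
        rw [← Nat.add_mul, ← Nat.add_mul, Nat.sub_add_cancel (by omega)]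
      rw [hs, h1]
      omega
    have hcfac : ∑ i, c i * g i = n + k * g 0 := hc
    omega

lemma aux_apery_decomp (he : 0 < g 0) (w : Fin (g 0) → ℕ)
    (hrange : Set.range w = Ap g (g 0)) (hadd : IsAdditive g) :
    ∀ n ∈ Sg g, ∃ i q, n = w i + q * g 0 ∧ ordOf g n = ordOf g (w i) + q := by
  intro n
  induction n using Nat.strong_induction_on with
  | _ n ih =>
    intro hn
    by_cases hap : ∃ b ∈ Sg g, n = b + g 0
    · obtain ⟨b, hb, rfl⟩ := hap
      obtain ⟨i, q, h1, h2⟩ := ih b (by omega) hb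
      exact ⟨i, q + 1, by rw [h1]; ring, by rw [hadd b hb, h2]; ring⟩
    · have hmem : n ∈ Ap g (g 0) := ⟨hn, hap⟩
      rw [← hrange] at hmem
      obtain ⟨i, hi⟩ := hmem
      exact ⟨i, 0, by omega, by rw [hi, Nat.add_zero]⟩

end AuxNS2
section AuxNS3
variable {t : ℕ} {g : Fin (t + 1) → ℕ}

lemma aux_helper_mul {a b c e : ℕ} (h : c ≤ a + b) :
    (a + b - c) * e + c * e = a * e + b * e := by
  rw [← Nat.add_mul, ← Nat.add_mul, Nat.sub_add_cancel h]

lemma aux_add_mul_e {a : ℕ} (ha : a ∈ Sg g) (k : ℕ) : a + k * g 0 ∈ Sg g := by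
  induction k with
  | zero => simpa using ha
  | succ k ih =>
      have := aux_sg_add ih (aux_g_mem 0)
      have heq : a + k * g 0 + g 0 = a + (k + 1) * g 0 := by ring
      rwa [heq] at this

lemma aux_mem_B_iff2 (hS : IsNumSgp g) (w : Fin (g 0) → ℕ)
    (hrange : Set.range w = Ap g (g 0)) (hadd : IsAdditive g) {n : ℕ} :
    n ∈ Sg (blowD g) ↔ ∃ i q, n + ordOf g (w i) * g 0 = w i + q * g 0 := by
  have he := hS.pos
  have hm := hS.mono.monotone
  constructor
  · intro hn
    obtain ⟨k, c, hc, hk⟩ := (aux_mem_B_iff hm).mp hn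
    have hs : n + k * g 0 ∈ Sg g := ⟨c, hc⟩
    obtain ⟨i, q, h1, h2⟩ := aux_apery_decomp he w hrange hadd _ hs
    have hord : k ≤ ordOf g (n + k * g 0) := le_trans hk (aux_le_ord he hm hc)
    rw [h2] at hord
    refine ⟨i, q + ordOf g (w i) - k, ?_⟩
    have hord' : k ≤ q + ordOf g (w i) := by omega
    have hmul := aux_helper_mul (e := g 0) (a := q) (b := ordOf g (w i)) (c := k) hord'
    omega
  · rintro ⟨i, q, hq⟩
    have hwi : w i ∈ Sg g := by
      have : w i ∈ Ap g (g 0) := hrange ▸ Set.mem_range_self i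
      exact this.1
    obtain ⟨c, hc, hlen⟩ := aux_ord_spec he hm hwi
    refine (aux_mem_B_iff hm).mpr
      ⟨ordOf g (w i), fun j => c j + if j = 0 then q else 0, ?_, ?_⟩
    · show ∑ j, (c j + if j = 0 then q else 0) * g j = n + ordOf g (w i) * g 0
      have hsplit : ∑ j, (c j + if j = 0 then q else 0) * g j
          = ∑ j, c j * g j + ∑ j, (if j = 0 then q else 0) * g j := by
        rw [← Finset.sum_add_distrib]
        exact Finset.sum_congr rfl (fun j _ => by ring)
      have hite : ∑ j : Fin (t+1), (if j = 0 then q else 0) * g j = q * g 0 := by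
        rw [Finset.sum_eq_single 0] <;> simp (config := {contextual := true})
      have hcg : ∑ j, c j * g j = w i := hc
      rw [hsplit, hite, hcg, hq]
    · have : ∑ j : Fin (t+1), (c j + if j = 0 then q else 0)
          = ∑ j, c j + ∑ j : Fin (t+1), (if j = 0 then q else 0) := Finset.sum_add_distrib
      rw [this, hlen]
      omega

lemma aux_res_inj (hS : IsNumSgp g) (w : Fin (g 0) → ℕ) (hw : StrictMono w)
    (hrange : Set.range w = Ap g (g 0)) :
    ∀ i j : Fin (g 0), w i % g 0 = w j % g 0 → i = j := by
  have key : ∀ i j : Fin (g 0), i < j → w i % g 0 = w j % g 0 → False := by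
    intro i j hij heq
    have hlt : w i < w j := hw hij
    have hdvd : g 0 ∣ w j - w i := (Nat.modEq_iff_dvd' (le_of_lt hlt)).mp heq
    obtain ⟨m, hmeq⟩ := hdvd
    have hm1 : 1 ≤ m := by
      rcases Nat.eq_zero_or_pos m with h | h
      · rw [h, Nat.mul_zero] at hmeq; omega
      · exact h
    have hwiS : w i ∈ Sg g := (hrange ▸ Set.mem_range_self i : w i ∈ Ap g (g 0)).1
    have hb : w i + (m - 1) * g 0 ∈ Sg g := aux_add_mul_e hwiS (m - 1)
    have hwjAp : w j ∈ Ap g (g 0) := hrange ▸ Set.mem_range_self j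
    refine hwjAp.2 ⟨w i + (m - 1) * g 0, hb, ?_⟩
    have h5 : (m - 1) * g 0 + g 0 = m * g 0 := by
      rw [Nat.sub_one_mul, Nat.sub_add_cancel (Nat.le_mul_of_pos_left _ hm1)]
    have h6 : g 0 * m = m * g 0 := Nat.mul_comm _ _
    omega
  intro i j heq
  rcases lt_trichotomy i j with h | h | h
  · exact absurd heq (fun hh => key i j h hh)
  · exact h
  · exact absurd heq.symm (fun hh => key j i h hh)

lemma aux_dvd_nonneg {e x : ℤ} (he : 0 < e) (h : e ∣ x) (h2 : -e < x) : 0 ≤ x := by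
  by_contra hx
  push_neg at hx
  have := Int.le_of_dvd (by omega) (dvd_neg.mpr h)
  omega

end AuxNS3

/-- Lemma 4.12: the blowup of a supersymmetric semigroup is symmetric. -/
theorem stmt15 {t : ℕ} (g : Fin (t + 1) → ℕ) (hS : IsNumSgp g)
    (w : Fin (g 0) → ℕ) (hw : StrictMono w) (hrange : Set.range w = Ap g (g 0))
    (hadd : IsAdditive g)
    (hsup : ∀ i j : Fin (g 0), (i : ℕ) + (j : ℕ) + 1 = g 0 →
      w i + w j = w ⟨g 0 - 1, Nat.sub_lt hS.pos one_pos⟩ ∧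
      ordOf g (w i) + ordOf g (w j) = ordOf g (w ⟨g 0 - 1, Nat.sub_lt hS.pos one_pos⟩)) :
    Symm (Sg (blowD g)) := by
  have he := hS.pos
  have hm := hS.mono.monotone
  have hE : (0:ℤ) < (g 0 : ℤ) := by exact_mod_cast he
  set last : Fin (g 0) := ⟨g 0 - 1, Nat.sub_lt hS.pos one_pos⟩ with hlastdef
  set V : Fin (g 0) → ℤ := fun i => (w i : ℤ) - (ordOf g (w i) : ℤ) * (g 0 : ℤ) with hVdef
  have hwS : ∀ i, w i ∈ Sg g := fun i => (hrange ▸ Set.mem_range_self i : w i ∈ Ap g (g 0)).1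
  have hVnn : ∀ i, 0 ≤ V i := by
    intro i
    have h := aux_ord_mul_le he hm (hwS i)
    have h2 : ((ordOf g (w i) * g 0 : ℕ) : ℤ) ≤ (w i : ℤ) := by exact_mod_cast h
    push_cast at h2
    simp only [hVdef]
    linarith
  have hresV : ∀ i, (g 0 : ℤ) ∣ (w i : ℤ) - V i := fun i =>
    ⟨ordOf g (w i), by simp only [hVdef]; ring⟩
  -- membership characterization over ℤ
  have hchar : ∀ z : ℤ, ZMem (Sg (blowD g)) z ↔ ∃ i, V i ≤ z ∧ (g 0:ℤ) ∣ z - (w i:ℤ) := by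
    intro z
    constructor
    · rintro ⟨hz, hmem⟩
      obtain ⟨i, q, hq⟩ := (aux_mem_B_iff2 hS w hrange hadd).mp hmem
      have hq' : (z.toNat : ℤ) + (ordOf g (w i):ℤ) * (g 0:ℤ)
          = (w i:ℤ) + (q:ℤ) * (g 0:ℤ) := by exact_mod_cast hq
      rw [Int.toNat_of_nonneg hz] at hq'
      refine ⟨i, ?_, ⟨(q:ℤ) - ordOf g (w i), by linear_combination hq'⟩⟩
      have hq0 : (0:ℤ) ≤ (q:ℤ) * (g 0:ℤ) := by positivity
      simp only [hVdef]
      linarith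
    · rintro ⟨i, hVi, hdvd⟩
      have hz : 0 ≤ z := le_trans (hVnn i) hVi
      have hdvd2 : (g 0:ℤ) ∣ z - V i := by
        have h3 : z - V i = (z - w i) + ((w i:ℤ) - V i) := by ring
        rw [h3]; exact dvd_add hdvd (hresV i)
      obtain ⟨q', hq'⟩ := hdvd2
      have hq'nn : 0 ≤ q' := by nlinarith [hVi, hq', hE]
      refine ⟨hz, (aux_mem_B_iff2 hS w hrange hadd).mpr ⟨i, q'.toNat, ?_⟩⟩
      have hcast : (z.toNat:ℤ) + (ordOf g (w i):ℤ) * (g 0:ℤ)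
          = (w i:ℤ) + (q'.toNat:ℤ) * (g 0:ℤ) := by
        rw [Int.toNat_of_nonneg hz, Int.toNat_of_nonneg hq'nn]
        simp only [hVdef] at hq'
        linear_combination hq'
      exact_mod_cast hcast
  -- distinct residues
  have hdiff : ∀ i j : Fin (g 0), (g 0:ℤ) ∣ (w i:ℤ) - (w j:ℤ) → i = j := by
    intro i j hd
    exact (aux_res_inj hS w hw hrange j i ((Nat.modEq_iff_dvd).mpr hd)).symm
  -- surjectivity of residues
  have hinj : Function.Injective
      (fun i : Fin (g 0) => (⟨w i % g 0, Nat.mod_lt _ he⟩ : Fin (g 0))) := by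
    intro i j hij
    exact aux_res_inj hS w hw hrange i j (congrArg Fin.val hij)
  have hsurj : ∀ z : ℤ, ∃ i, (g 0:ℤ) ∣ z - (w i:ℤ) := by
    intro z
    have h1 : 0 ≤ z % (g 0:ℤ) := Int.emod_nonneg z (by omega)
    have h2 : z % (g 0:ℤ) < (g 0:ℤ) := Int.emod_lt_of_pos z hE
    have hrlt : (z % (g 0:ℤ)).toNat < g 0 := by omega
    obtain ⟨i, hi⟩ := (Finite.injective_iff_surjective.mp hinj) ⟨(z % (g 0:ℤ)).toNat, hrlt⟩
    have hval : w i % g 0 = (z % (g 0:ℤ)).toNat := congrArg Fin.val hi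
    refine ⟨i, ?_⟩
    have hwi : (w i : ℤ) % (g 0:ℤ) = z % (g 0:ℤ) := by
      have hc : ((w i % g 0 : ℕ) : ℤ) = (w i:ℤ) % (g 0:ℤ) := by push_cast; ring
      rw [← hc, hval, Int.toNat_of_nonneg h1]
    exact (show Int.ModEq (g 0:ℤ) (w i:ℤ) z from hwi).dvd
  -- pairing
  have hcompl : ∀ i : Fin (g 0), ∃ j : Fin (g 0),
      (i:ℕ) + (j:ℕ) + 1 = g 0 ∧ V i + V j = V last := by
    intro i
    have hilt : (i:ℕ) < g 0 := i.isLt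
    refine ⟨⟨g 0 - 1 - i, by omega⟩, by simp; omega, ?_⟩
    obtain ⟨hw1, hw2⟩ := hsup i ⟨g 0 - 1 - i, by omega⟩ (by simp; omega)
    have hc1 : (w i:ℤ) + (w ⟨g 0 - 1 - i, by omega⟩ : ℤ) = (w last:ℤ) := by exact_mod_cast hw1
    have hc2 : (ordOf g (w i):ℤ) + (ordOf g (w ⟨g 0 - 1 - i, by omega⟩):ℤ)
        = (ordOf g (w last):ℤ) := by exact_mod_cast hw2
    simp only [hVdef]
    linear_combination hc1 - (g 0:ℤ) * hc2
  have hVle : ∀ i, V i ≤ V last := by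
    intro i
    obtain ⟨j, _, hij⟩ := hcompl i
    have := hVnn j
    linarith
  -- Frobenius number
  have hFGreatest : IsGreatest {z : ℤ | ¬ ZMem (Sg (blowD g)) z} (V last - g 0) := by
    constructor
    · intro hmem
      obtain ⟨i, hVi, hdvd⟩ := (hchar _).mp hmem
      have hd2 : (g 0:ℤ) ∣ (w last:ℤ) - (w i:ℤ) := by
        have heq : (w last:ℤ) - (w i:ℤ)
            = ((w last:ℤ) - V last) + (V last - (g 0:ℤ) - (w i:ℤ)) + (g 0:ℤ) := by ring
        rw [heq]
        exact dvd_add (dvd_add (hresV last) hdvd) dvd_rfl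
      have hli : last = i := hdiff last i hd2
      rw [← hli] at hVi
      omega
    · intro z hz
      by_contra hlt
      push_neg at hlt
      apply hz
      obtain ⟨i, hdvd⟩ := hsurj z
      refine (hchar z).mpr ⟨i, ?_, hdvd⟩
      have hdvd2 : (g 0:ℤ) ∣ z - V i := by
        have h3 : z - V i = (z - w i) + ((w i:ℤ) - V i) := by ring
        rw [h3]; exact dvd_add hdvd (hresV i)
      have hVi := hVle i
      have := aux_dvd_nonneg hE hdvd2 (by linarith)
      linarith
  have hFrob : Frob (Sg (blowD g)) = V last - g 0 := hFGreatest.csSup_eq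
  -- symmetry
  intro x y hxy
  rw [hFrob] at hxy
  obtain ⟨i, hdx⟩ := hsurj x
  obtain ⟨j, hij, hVij⟩ := hcompl i
  have d1 : (g 0:ℤ) ∣ x - V i := by
    have h3 : x - V i = (x - w i) + ((w i:ℤ) - V i) := by ring
    rw [h3]; exact dvd_add hdx (hresV i)
  have hdy : (g 0:ℤ) ∣ y - (w j:ℤ) := by
    have heq : y - (w j:ℤ) = -(x - V i) - ((w j:ℤ) - V j) - (g 0:ℤ) := by
      linear_combination hxy - hVij
    rw [heq]
    exact dvd_sub (dvd_sub (dvd_neg.mpr d1) (hresV j)) dvd_rfl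
  have hxchar : ZMem (Sg (blowD g)) x ↔ V i ≤ x := by
    constructor
    · intro hx
      obtain ⟨i', hVi', hd'⟩ := (hchar x).mp hx
      have hii : i = i' := by
        apply hdiff
        have h3 : (w i:ℤ) - (w i':ℤ) = (x - w i') - (x - w i) := by ring
        rw [h3]; exact dvd_sub hd' hdx
      rwa [hii]
    · intro hVi
      exact (hchar x).mpr ⟨i, hVi, hdx⟩
  have hychar : ZMem (Sg (blowD g)) y ↔ V j ≤ y := by
    constructor
    · intro hy
      obtain ⟨j', hVj', hd'⟩ := (hchar y).mp hy
      have hjj : j = j' := by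
        apply hdiff
        have h3 : (w j:ℤ) - (w j':ℤ) = (y - w j') - (y - w j) := by ring
        rw [h3]; exact dvd_sub hd' hdy
      rwa [hjj]
    · intro hVj
      exact (hchar y).mpr ⟨j, hVj, hdy⟩
  rw [hxchar, hychar]
  constructor
  · intro hx hy
    linarith
  · intro hny
    by_contra hnx
    push_neg at hnx hny
    have hpos : 0 < V i - x := by linarith
    have hd : (g 0:ℤ) ∣ V i - x := by
      have := dvd_neg.mpr d1
      rwa [neg_sub] at this
    have hle := Int.le_of_dvd hpos hd
    linarith
end
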